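/- arXiv:1508.04706 — 6 statements merged into one kernel-verified Lean document; each statement's English description precedes it below -/
import Mathlib

section
/- Let B ∈ L¹(a₁,a₂) be real-valued with B(x) ≥ 0 a.e., let ν₁ ∈ [0,∞), ν₂ ∈ (0,∞], |ν₁| + |1/ν₂| ≠ 0. If ω ∈ ℂ, ω ≠ 0, and y ∈ W^{2,1}[a₁,a₂] is a nontrivial solution of y'' = -ω² B y with boundary conditions y'(a₁) = -iω ν₁ y(a₁) and y'(a₂) = iω ν₂ y(a₂), then Im ω < 0. -/
open MeasureTheory Set

/-- `IsMode a₁ a₂ B ν₁ μ₂ ω y g` : `y` is a nontrivial `W^{2,1}` solution (with derivative `g`)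
of `y'' = -ω² B y` on `(a₁,a₂)` satisfying the radiation boundary conditions
`y'(a₁) = -i ω ν₁ y(a₁)` and `μ₂ y'(a₂) = i ω y(a₂)`, where `μ₂ = 1/ν₂` (so `μ₂ = 0`
encodes `ν₂ = ∞`, i.e. the Dirichlet condition `y(a₂) = 0` when `ω ≠ 0`). -/
def IsMode (a₁ a₂ : ℝ) (B : ℝ → ℝ) (ν₁ μ₂ : ℝ) (ω : ℂ) (y g : ℝ → ℂ) : Prop :=
  ContinuousOn y (Set.Icc a₁ a₂) ∧ ContinuousOn g (Set.Icc a₁ a₂) ∧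
  MeasureTheory.IntegrableOn (fun t => (B t : ℂ) * y t) (Set.Icc a₁ a₂) ∧
  (∀ x ∈ Set.Icc a₁ a₂, y x = y a₁ + ∫ t in a₁..x, g t) ∧
  (∀ x ∈ Set.Icc a₁ a₂, g x = g a₁ + ∫ t in a₁..x, -(ω ^ 2) * (B t : ℂ) * y t) ∧
  g a₁ = -Complex.I * ω * (ν₁ : ℂ) * y a₁ ∧
  (μ₂ : ℂ) * g a₂ = Complex.I * ω * y a₂ ∧
  ∃ x ∈ Set.Icc a₁ a₂, y x ≠ 0

/-- `ω` is a quasi-eigenvalue of the structure `B`. -/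
def IsQuasiEigenvalue (a₁ a₂ : ℝ) (B : ℝ → ℝ) (ν₁ μ₂ : ℝ) (ω : ℂ) : Prop :=
  ω ≠ 0 ∧ ∃ y g : ℝ → ℂ, IsMode a₁ a₂ B ν₁ μ₂ ω y g



section QEAux

lemma fubini_key (a b : ℝ) (hab : a ≤ b) (f k : ℝ → ℂ)
    (hf : IntegrableOn f (Icc a b)) (hk : IntegrableOn k (Icc a b)) :
    ∫ x in a..b, f x * (∫ t in a..x, k t) = ∫ t in a..b, (∫ x in t..b, f x) * k t := by
  set μ := volume.restrict (Ioc a b) with hμ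
  have hfμ : Integrable f μ := hf.mono_set Ioc_subset_Icc_self
  have hkμ : Integrable k μ := hk.mono_set Ioc_subset_Icc_self
  set S : Set (ℝ × ℝ) := {p | p.2 ≤ p.1} with hSdef
  have hS : MeasurableSet S := measurableSet_le measurable_snd measurable_fst
  set F : ℝ × ℝ → ℂ := S.indicator (fun p => f p.1 * k p.2) with hFdef
  have hF : Integrable F (μ.prod μ) := (hfμ.mul_prod hkμ).indicator hS
  have step1 : ∀ x ∈ Ioc a b, f x * (∫ t in a..x, k t) = ∫ t, F (x, t) ∂μ := by
    intro x hx
    have e1 : ∀ t, F (x, t) = (Iic x).indicator (fun t => f x * k t) t := by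
      intro t
      by_cases h : t ≤ x <;>
        simp [hFdef, hSdef, Set.indicator, h]
    simp_rw [e1]
    rw [hμ, integral_indicator measurableSet_Iic, Measure.restrict_restrict measurableSet_Iic]
    have e2 : Iic x ∩ Ioc a b = Ioc a x := by
      ext t
      simp only [mem_inter_iff, mem_Iic, mem_Ioc]
      exact ⟨fun h => ⟨h.2.1, h.1⟩, fun h => ⟨h.2, h.1, h.2.trans hx.2⟩⟩
    rw [e2, MeasureTheory.integral_const_mul, intervalIntegral.integral_of_le hx.1.le]
  have step2 : ∀ t ∈ Ioc a b, (∫ x in t..b, f x) * k t = ∫ x, F (x, t) ∂μ := by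
    intro t ht
    have e1 : ∀ x, F (x, t) = (Ici t).indicator (fun x => f x * k t) x := by
      intro x
      by_cases h : t ≤ x <;>
        simp [hFdef, hSdef, Set.indicator, h]
    simp_rw [e1]
    rw [hμ, integral_indicator measurableSet_Ici, Measure.restrict_restrict measurableSet_Ici]
    have e2 : Ici t ∩ Ioc a b = Icc t b := by
      ext x
      simp only [mem_inter_iff, mem_Ici, mem_Ioc, mem_Icc]
      exact ⟨fun h => ⟨h.1, h.2.2⟩, fun h => ⟨h.1, ht.1.trans_le h.1, h.2⟩⟩
    rw [e2, MeasureTheory.integral_mul_const, integral_Icc_eq_integral_Ioc,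
      intervalIntegral.integral_of_le ht.2]
  rw [intervalIntegral.integral_of_le hab, intervalIntegral.integral_of_le hab]
  calc ∫ x in Ioc a b, f x * (∫ t in a..x, k t)
      = ∫ x, (∫ t, F (x, t) ∂μ) ∂μ := setIntegral_congr_fun measurableSet_Ioc step1
    _ = ∫ t, (∫ x, F (x, t) ∂μ) ∂μ := integral_integral_swap (by exact hF)
    _ = ∫ t in Ioc a b, (∫ x in t..b, f x) * k t :=
        (setIntegral_congr_fun measurableSet_Ioc step2).symm

lemma ibp (a b : ℝ) (hab : a ≤ b) (f k u v : ℝ → ℂ)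
    (hf : IntegrableOn f (Icc a b)) (hk : IntegrableOn k (Icc a b))
    (hu : ∀ x ∈ Icc a b, u x = u a + ∫ t in a..x, f t)
    (hv : ∀ x ∈ Icc a b, v x = v a + ∫ t in a..x, k t) :
    ∫ x in a..b, (f x * v x + u x * k x) = u b * v b - u a * v a := by
  have huIcc : uIcc a b = Icc a b := uIcc_of_le hab
  have hfu : IntegrableOn f (uIcc a b) := by rwa [huIcc]
  have hku : IntegrableOn k (uIcc a b) := by rwa [huIcc]
  set pf : ℝ → ℂ := fun x => ∫ t in a..x, f t with hpf
  set pk : ℝ → ℂ := fun x => ∫ t in a..x, k t with hpk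
  have hpfc : ContinuousOn pf (Icc a b) := by
    rw [← huIcc]; exact intervalIntegral.continuousOn_primitive_interval hfu
  have hpkc : ContinuousOn pk (Icc a b) := by
    rw [← huIcc]; exact intervalIntegral.continuousOn_primitive_interval hku
  have hfI : IntervalIntegrable f volume a b := hfu.intervalIntegrable
  have hkI : IntervalIntegrable k volume a b := hku.intervalIntegrable
  have hfpk : IntegrableOn (fun x => f x * pk x) (Icc a b) :=
    hf.mul_continuousOn hpkc isCompact_Icc
  have hpfk : IntegrableOn (fun x => pf x * k x) (Icc a b) :=
    IntegrableOn.continuousOn_mul hpfc hk isCompact_Icc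
  have hfpkI : IntervalIntegrable (fun x => f x * pk x) volume a b := by
    rw [← huIcc] at hfpk; exact hfpk.intervalIntegrable
  have hpfkI : IntervalIntegrable (fun x => pf x * k x) volume a b := by
    rw [← huIcc] at hpfk; exact hpfk.intervalIntegrable
  set Cf : ℂ := ∫ t in a..b, f t with hCf
  set Ck : ℂ := ∫ t in a..b, k t with hCk
  have hub : u b = u a + Cf := hu b ⟨hab, le_refl b⟩
  have hvb : v b = v a + Ck := hv b ⟨hab, le_refl b⟩
  have congr1 : ∫ x in a..b, (f x * v x + u x * k x)
      = ∫ x in a..b, ((f x * v a + f x * pk x) + (u a * k x + pf x * k x)) := by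
    apply intervalIntegral.integral_congr
    intro x hx
    rw [huIcc] at hx
    simp only [hv x hx, hu x hx]
    ring
  have split : ∫ x in a..b, ((f x * v a + f x * pk x) + (u a * k x + pf x * k x))
      = ((∫ x in a..b, f x * v a) + ∫ x in a..b, f x * pk x)
        + ((∫ x in a..b, u a * k x) + ∫ x in a..b, pf x * k x) := by
    rw [intervalIntegral.integral_add ((hfI.mul_const _).add hfpkI)
      ((hkI.const_mul _).add hpfkI),
      intervalIntegral.integral_add (hfI.mul_const _) hfpkI,
      intervalIntegral.integral_add (hkI.const_mul _) hpfkI]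
  have e1 : ∫ x in a..b, f x * v a = Cf * v a := by
    rw [intervalIntegral.integral_mul_const]
  have e4 : ∫ x in a..b, u a * k x = u a * Ck := by
    rw [intervalIntegral.integral_const_mul]
  have e2 : ∫ x in a..b, f x * pk x = Cf * Ck - ∫ x in a..b, pf x * k x := by
    rw [fubini_key a b hab f k hf hk]
    have congr2 : ∫ t in a..b, (∫ x in t..b, f x) * k t
        = ∫ t in a..b, (Cf * k t - pf t * k t) := by
      apply intervalIntegral.integral_congr
      intro t ht
      rw [huIcc] at ht
      have hsub : Cf - pf t = ∫ x in t..b, f x := by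
        exact intervalIntegral.integral_interval_sub_left hfI
          (hfu.intervalIntegrable.mono_set (by rw [huIcc, uIcc_of_le ht.1]; exact Icc_subset_Icc le_rfl ht.2))
      show (∫ x in t..b, f x) * k t = Cf * k t - pf t * k t
      rw [← hsub]; ring
    rw [congr2, intervalIntegral.integral_sub (hkI.const_mul _) hpfkI,
      intervalIntegral.integral_const_mul]
  rw [congr1, split, e1, e2, e4, hub, hvb]
  ring

lemma intervalIntegral_conj {f : ℝ → ℂ} {a b : ℝ} :
    ∫ x in a..b, (starRingEnd ℂ) (f x) = (starRingEnd ℂ) (∫ x in a..b, f x) := by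
  rw [intervalIntegral, intervalIntegral, map_sub, ← integral_conj, ← integral_conj]

lemma myUniqueZero (a₁ a₂ : ℝ) (h12 : a₁ ≤ a₂) (B : ℝ → ℝ)
    (hBint : IntegrableOn B (Icc a₁ a₂))
    (hB0 : ∀ᵐ x ∂(volume.restrict (Icc a₁ a₂)), 0 ≤ B x)
    (ω : ℂ) (y g : ℝ → ℂ)
    (hy_cont : ContinuousOn y (Icc a₁ a₂))
    (hg_cont : ContinuousOn g (Icc a₁ a₂))
    (hBy_int : IntegrableOn (fun t => (B t : ℂ) * y t) (Icc a₁ a₂))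
    (hy_eq : ∀ x ∈ Icc a₁ a₂, y x = y a₁ + ∫ t in a₁..x, g t)
    (hg_eq : ∀ x ∈ Icc a₁ a₂, g x = g a₁ + ∫ t in a₁..x, -(ω ^ 2) * (B t : ℂ) * y t)
    (c : ℝ) (hc : c ∈ Icc a₁ a₂) (hyc : y c = 0) (hgc : g c = 0) :
    ∀ x ∈ Icc a₁ a₂, y x = 0 := by
  have hsubIcc : ∀ {p q : ℝ}, p ∈ Icc a₁ a₂ → q ∈ Icc a₁ a₂ → uIcc p q ⊆ Icc a₁ a₂ := by
    intro p q hp hq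
    rw [← uIcc_of_le h12] at hp hq ⊢
    exact uIcc_subset_uIcc hp hq
  have hh_int : IntegrableOn (fun t => -(ω ^ 2) * (B t : ℂ) * y t) (Icc a₁ a₂) := by
    have := hBy_int.const_mul (-(ω ^ 2))
    simpa [mul_assoc, IntegrableOn] using this
  have hg_int : IntegrableOn g (Icc a₁ a₂) := hg_cont.integrableOn_Icc
  have hhI : ∀ {p q : ℝ}, p ∈ Icc a₁ a₂ → q ∈ Icc a₁ a₂ →
      IntervalIntegrable (fun t => -(ω ^ 2) * (B t : ℂ) * y t) volume p q := fun hp hq =>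
    (hh_int.mono_set (hsubIcc hp hq)).intervalIntegrable
  have hgI : ∀ {p q : ℝ}, p ∈ Icc a₁ a₂ → q ∈ Icc a₁ a₂ →
      IntervalIntegrable g volume p q := fun hp hq =>
    (hg_int.mono_set (hsubIcc hp hq)).intervalIntegrable
  have ha₁ : a₁ ∈ Icc a₁ a₂ := ⟨le_rfl, h12⟩
  have hy2 : ∀ p x, p ∈ Icc a₁ a₂ → x ∈ Icc a₁ a₂ → y x = y p + ∫ t in p..x, g t := by
    intro p x hp hx
    have := intervalIntegral.integral_interval_sub_left (hgI ha₁ hx) (hgI ha₁ hp)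
    rw [hy_eq x hx, hy_eq p hp, ← this]
    ring
  have hg2 : ∀ p x, p ∈ Icc a₁ a₂ → x ∈ Icc a₁ a₂ →
      g x = g p + ∫ t in p..x, -(ω ^ 2) * (B t : ℂ) * y t := by
    intro p x hp hx
    have := intervalIntegral.integral_interval_sub_left (hhI ha₁ hx) (hhI ha₁ hp)
    rw [hg_eq x hx, hg_eq p hp, ← this]
    ring
  set K : ℝ := ‖ω‖ ^ 2 with hKdef
  have hK0 : 0 ≤ K := by positivity
  set βt : ℝ := ∫ x in Icc a₁ a₂, B x with hβtdef
  have hβt0 : 0 ≤ βt := integral_nonneg_of_ae hB0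
  set δ : ℝ := (2 * (K + 1) * (βt + 1))⁻¹ with hδdef
  have hδpos : 0 < δ := by positivity
  have hδval : δ * ((K + 1) * (βt + 1)) = 1 / 2 := by
    have h1 : (0:ℝ) < K + 1 := by linarith
    have h2 : (0:ℝ) < βt + 1 := by linarith
    rw [hδdef]
    field_simp
  -- the local step
  have step : ∀ p q : ℝ, p ∈ Icc a₁ a₂ → q ∈ Icc a₁ a₂ → |q - p| ≤ δ → y p = 0 → g p = 0 →
      ∀ x ∈ uIcc p q, y x = 0 ∧ g x = 0 := by
    intro p q hp hq hpq hyp hgp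
    have hsub : uIcc p q ⊆ Icc a₁ a₂ := hsubIcc hp hq
    obtain ⟨xm, hxm, hmax⟩ := isCompact_uIcc.exists_isMaxOn nonempty_uIcc
      ((hy_cont.mono hsub).norm)
    set M : ℝ := ‖y xm‖ with hMdef
    have hM0 : 0 ≤ M := norm_nonneg _
    have hyM : ∀ t ∈ uIcc p q, ‖y t‖ ≤ M := fun t ht => hmax ht
    set β : ℝ := ∫ t in uIcc p q, B t with hβdef
    have hB0' : ∀ᵐ t ∂volume.restrict (uIcc p q), 0 ≤ B t :=
      ae_restrict_of_ae_restrict_of_subset hsub hB0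
    have hβ0 : 0 ≤ β := setIntegral_nonneg_of_ae_restrict hB0'
    have hββt : β ≤ βt := setIntegral_mono_set hBint hB0 hsub.eventuallyLE
    have habsB : ∀ x ∈ uIcc p q, |∫ t in p..x, B t| ≤ β := by
      intro x hx
      have hΙx : uIoc p x ⊆ uIcc p q := Ioc_subset_Icc_self.trans (uIcc_subset_uIcc left_mem_uIcc hx)
      have hBuq : IntegrableOn B (uIcc p q) := hBint.mono_set hsub
      have hnn : 0 ≤ ∫ t in uIoc p x, B t :=
        setIntegral_nonneg_of_ae_restrict (ae_restrict_of_ae_restrict_of_subset hΙx hB0')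
      have hle : ∫ t in uIoc p x, B t ≤ β :=
        setIntegral_mono_set hBuq hB0' hΙx.eventuallyLE
      rcases le_total p x with h | h
      · rw [intervalIntegral.integral_of_le h]
        rw [uIoc_of_le h] at hnn hle
        rw [abs_of_nonneg hnn]
        exact hle
      · rw [intervalIntegral.integral_of_ge h, abs_neg]
        rw [uIoc_of_ge h] at hnn hle
        rw [abs_of_nonneg hnn]
        exact hle
    -- bound on g
    have gbound : ∀ x ∈ uIcc p q, ‖g x‖ ≤ K * M * β := by
      intro x hx
      have hx' : x ∈ Icc a₁ a₂ := hsub hx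
      have hΙx : uIoc p x ⊆ uIcc p q := Ioc_subset_Icc_self.trans (uIcc_subset_uIcc left_mem_uIcc hx)
      rw [hg2 p x hp hx', hgp, zero_add]
      have hb1 : ‖∫ t in p..x, -(ω ^ 2) * (B t : ℂ) * y t‖
          ≤ |∫ t in p..x, K * M * B t| := by
        apply intervalIntegral.norm_integral_le_abs_of_norm_le
        · have hB0'' : ∀ᵐ t ∂volume.restrict (uIoc p x), 0 ≤ B t :=
            ae_restrict_of_ae_restrict_of_subset hΙx hB0'
          filter_upwards [hB0'', ae_restrict_mem measurableSet_uIoc] with t htB htm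
          have hyt : ‖y t‖ ≤ M := hyM t (hΙx htm)
          have hnorm : ‖-(ω ^ 2) * (B t : ℂ) * y t‖ = K * |B t| * ‖y t‖ := by
            rw [norm_mul, norm_mul, norm_neg, norm_pow, Complex.norm_real]
            rfl
          rw [hnorm, abs_of_nonneg htB]
          nlinarith [norm_nonneg (y t), mul_nonneg (mul_nonneg hK0 htB) (sub_nonneg.mpr hyt)]
        · have : IntervalIntegrable B volume p x :=
            (hBint.mono_set (hsubIcc hp hx')).intervalIntegrable
          simpa [mul_assoc] using this.const_mul (K * M)
      have hb2 : |∫ t in p..x, K * M * B t| ≤ K * M * β := by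
        rw [intervalIntegral.integral_const_mul, abs_mul,
          abs_of_nonneg (mul_nonneg hK0 hM0)]
        exact mul_le_mul_of_nonneg_left (habsB x hx) (mul_nonneg hK0 hM0)
      exact hb1.trans hb2
    have ybound : ∀ x ∈ uIcc p q, ‖y x‖ ≤ δ * (K * M * β) := by
      intro x hx
      have hx' := hsub hx
      rw [hy2 p x hp hx', hyp, zero_add]
      have hΙx : uIoc p x ⊆ uIcc p q := Ioc_subset_Icc_self.trans (uIcc_subset_uIcc left_mem_uIcc hx)
      have h1 : ‖∫ t in p..x, g t‖ ≤ K * M * β * |x - p| :=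
        intervalIntegral.norm_integral_le_of_norm_le_const
          (fun t ht => gbound t (hΙx ht))
      have h2 : |x - p| ≤ δ := by
        have hm : |q - p| = max p q - min p q := (max_sub_min_eq_abs p q).symm
        have h3 : |x - p| ≤ |q - p| := by
          rw [abs_sub_le_iff, hm]
          constructor <;> [skip; skip] <;>
            have h4 := hx.1 <;> have h5 := hx.2 <;>
            have h6 := min_le_left p q <;> have h7 := le_max_left p q <;>
            linarith
        exact h3.trans hpq
      calc ‖∫ t in p..x, g t‖ ≤ K * M * β * |x - p| := h1
        _ ≤ K * M * β * δ := mul_le_mul_of_nonneg_left h2 (by positivity)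
        _ = δ * (K * M * β) := by ring
    have hMz : M = 0 := by
      have h1 : M ≤ δ * (K * M * β) := ybound xm hxm
      have h2 : δ * (K * β) ≤ 1 / 2 := by
        have h3 : K * β ≤ (K + 1) * (βt + 1) := by nlinarith
        calc δ * (K * β) ≤ δ * ((K + 1) * (βt + 1)) :=
              mul_le_mul_of_nonneg_left h3 hδpos.le
          _ = 1 / 2 := hδval
      nlinarith
    have yzero : ∀ x ∈ uIcc p q, y x = 0 := by
      intro x hx
      have h := hyM x hx
      rw [hMz] at h
      exact norm_le_zero_iff.mp h
    intro x hx
    refine ⟨yzero x hx, ?_⟩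
    have hx' := hsub hx
    rw [hg2 p x hp hx', hgp, zero_add]
    have hEq : EqOn (fun t => -(ω ^ 2) * (B t : ℂ) * y t) (fun _ => (0 : ℂ)) (uIcc p x) := by
      intro t ht
      show -(ω ^ 2) * (B t : ℂ) * y t = 0
      rw [yzero t (uIcc_subset_uIcc left_mem_uIcc hx ht), mul_zero]
    rw [intervalIntegral.integral_congr hEq, intervalIntegral.integral_const]
    simp
  -- rightward propagation
  have right : ∀ n : ℕ, ∀ x ∈ Icc c (min a₂ (c + n * δ)), y x = 0 ∧ g x = 0 := by
    intro n
    induction n with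
    | zero =>
      intro x hx
      simp only [Nat.cast_zero, zero_mul, add_zero] at hx
      have hxc : x = c := le_antisymm (hx.2.trans (min_le_right _ _)) hx.1
      rw [hxc]; exact ⟨hyc, hgc⟩
    | succ n ih =>
      intro x hx
      set e : ℝ := min a₂ (c + n * δ) with hedef
      set e' : ℝ := min a₂ (c + (n + 1 : ℕ) * δ) with he'def
      have hnδ : (0:ℝ) ≤ n * δ := by positivity
      have hce : c ≤ e := le_min hc.2 (by linarith)
      have hee' : e ≤ e' := by
        apply min_le_min le_rfl
        have : ((n:ℝ)) * δ ≤ ((n+1:ℕ):ℝ) * δ := by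
          push_cast; nlinarith [hδpos.le]
        linarith
      have heI : e ∈ Icc a₁ a₂ := ⟨hc.1.trans hce, min_le_left _ _⟩
      have he'I : e' ∈ Icc a₁ a₂ := ⟨hc.1.trans (hce.trans hee'), min_le_left _ _⟩
      have hdiff : |e' - e| ≤ δ := by
        rw [abs_of_nonneg (by linarith)]
        have h1 : e' ≤ e + δ := by
          rw [hedef, he'def]
          rcases le_total a₂ (c + n * δ) with h | h
          · rw [min_eq_left h]
            exact le_trans (min_le_left _ _) (by linarith [hδpos.le])
          · rw [min_eq_right h]
            apply le_trans (min_le_right _ _)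
            push_cast; linarith
        linarith
      have he0 := ih e ⟨hce, le_rfl⟩
      have hst := step e e' heI he'I hdiff he0.1 he0.2
      rcases le_total x e with hxe | hxe
      · exact ih x ⟨hx.1, hxe⟩
      · exact hst x (by rw [uIcc_of_le hee']; exact ⟨hxe, hx.2⟩)
  -- leftward propagation
  have left : ∀ n : ℕ, ∀ x ∈ Icc (max a₁ (c - n * δ)) c, y x = 0 ∧ g x = 0 := by
    intro n
    induction n with
    | zero =>
      intro x hx
      simp only [Nat.cast_zero, zero_mul, sub_zero] at hx
      have hxc : x = c := le_antisymm hx.2 ((le_max_right _ _).trans hx.1)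
      rw [hxc]; exact ⟨hyc, hgc⟩
    | succ n ih =>
      intro x hx
      set e : ℝ := max a₁ (c - n * δ) with hedef
      set e' : ℝ := max a₁ (c - (n + 1 : ℕ) * δ) with he'def
      have hnδ : (0:ℝ) ≤ n * δ := by positivity
      have hce : e ≤ c := max_le hc.1 (by linarith)
      have hee' : e' ≤ e := by
        apply max_le_max le_rfl
        have : ((n:ℝ)) * δ ≤ ((n+1:ℕ):ℝ) * δ := by
          push_cast; nlinarith [hδpos.le]
        linarith
      have heI : e ∈ Icc a₁ a₂ := ⟨le_max_left _ _, hce.trans hc.2⟩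
      have he'I : e' ∈ Icc a₁ a₂ := ⟨le_max_left _ _, (hee'.trans hce).trans hc.2⟩
      have hdiff : |e' - e| ≤ δ := by
        rw [abs_of_nonpos (by linarith)]
        have h1 : e - δ ≤ e' := by
          rw [hedef, he'def]
          rcases le_total (c - n * δ) a₁ with h | h
          · rw [max_eq_left h]
            exact le_trans (by linarith [hδpos.le]) (le_max_left _ _)
          · rw [max_eq_right h]
            apply le_trans _ (le_max_right _ _)
            push_cast; linarith
        linarith
      have he0 := ih e ⟨le_rfl, hce⟩
      have hst := step e e' heI he'I hdiff he0.1 he0.2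
      rcases le_total e x with hxe | hxe
      · exact ih x ⟨hxe, hx.2⟩
      · exact hst x (by rw [uIcc_of_ge hee']; exact ⟨hx.1, hxe⟩)
  obtain ⟨n, hn⟩ := exists_nat_ge (max ((a₂ - c) / δ) ((c - a₁) / δ))
  have hn1 : (a₂ - c) / δ ≤ n := (le_max_left _ _).trans hn
  have hn2 : (c - a₁) / δ ≤ n := (le_max_right _ _).trans hn
  have hr : min a₂ (c + n * δ) = a₂ := by
    apply min_eq_left
    rw [div_le_iff₀ hδpos] at hn1
    linarith
  have hl : max a₁ (c - n * δ) = a₁ := by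
    apply max_eq_left
    rw [div_le_iff₀ hδpos] at hn2
    linarith
  intro x hx
  rcases le_total x c with h | h
  · exact (left n x (by rw [hl]; exact ⟨hx.1, h⟩)).1
  · exact (right n x (by rw [hr]; exact ⟨h, hx.2⟩)).1

end QEAux

/-- Quasi-eigenvalues of a nonnegative structure lie in the open lower half-plane. -/
theorem stmt1 (a₁ a₂ : ℝ) (h12 : a₁ < a₂) (B : ℝ → ℝ)
    (hBint : MeasureTheory.IntegrableOn B (Set.Icc a₁ a₂))
    (hB0 : ∀ᵐ x ∂(MeasureTheory.volume.restrict (Set.Icc a₁ a₂)), 0 ≤ B x)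
    (ν₁ μ₂ : ℝ) (hν₁ : 0 ≤ ν₁) (hμ₂ : 0 ≤ μ₂) (hne : ¬(ν₁ = 0 ∧ μ₂ = 0))
    (ω : ℂ) (hω : ω ≠ 0) (y g : ℝ → ℂ)
    (hmode : IsMode a₁ a₂ B ν₁ μ₂ ω y g) :
    ω.im < 0 := by
  obtain ⟨hy_cont, hg_cont, hBy_int, hy_eq, hg_eq, hbc1, hbc2, x₀, hx₀, hy₀⟩ := hmode
  by_contra hcon
  push_neg at hcon
  have h12' : a₁ ≤ a₂ := h12.le
  have ha₁ : a₁ ∈ Icc a₁ a₂ := ⟨le_rfl, h12'⟩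
  have ha₂ : a₂ ∈ Icc a₁ a₂ := ⟨h12', le_rfl⟩
  set f : ℝ → ℂ := fun t => -(ω ^ 2) * (B t : ℂ) * y t with hfdef
  have hf_int : IntegrableOn f (Icc a₁ a₂) := by
    have := hBy_int.const_mul (-(ω ^ 2))
    simpa [hfdef, mul_assoc, IntegrableOn] using this
  have hk_int : IntegrableOn (fun x => (starRingEnd ℂ) (g x)) (Icc a₁ a₂) :=
    ((Complex.continuous_conj.comp_continuousOn hg_cont)).integrableOn_Icc
  have hv : ∀ x ∈ Icc a₁ a₂, (starRingEnd ℂ) (y x)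
      = (starRingEnd ℂ) (y a₁) + ∫ t in a₁..x, (starRingEnd ℂ) (g t) := by
    intro x hx
    rw [intervalIntegral_conj, ← map_add, ← hy_eq x hx]
  have hIBP := ibp a₁ a₂ h12' f (fun x => (starRingEnd ℂ) (g x)) g
    (fun x => (starRingEnd ℂ) (y x)) hf_int hk_int hg_eq hv
  -- evaluate the left side
  set P : ℝ := ∫ x in a₁..a₂, B x * Complex.normSq (y x) with hPdef
  set Q : ℝ := ∫ x in a₁..a₂, Complex.normSq (g x) with hQdef
  have hfy_int : IntervalIntegrable (fun x => f x * (starRingEnd ℂ) (y x)) volume a₁ a₂ := by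
    have : IntegrableOn (fun x => f x * (starRingEnd ℂ) (y x)) (Icc a₁ a₂) :=
      hf_int.mul_continuousOn (Complex.continuous_conj.comp_continuousOn hy_cont) isCompact_Icc
    rw [← uIcc_of_le h12'] at this
    exact this.intervalIntegrable
  have hgg_int : IntervalIntegrable (fun x => g x * (starRingEnd ℂ) (g x)) volume a₁ a₂ := by
    have : IntegrableOn (fun x => g x * (starRingEnd ℂ) (g x)) (Icc a₁ a₂) :=
      (hg_cont.mul (Complex.continuous_conj.comp_continuousOn hg_cont)).integrableOn_Icc
    rw [← uIcc_of_le h12'] at this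
    exact this.intervalIntegrable
  have hA : ∫ x in a₁..a₂, f x * (starRingEnd ℂ) (y x) = -(ω ^ 2) * (P : ℂ) := by
    have e : ∀ x : ℝ, f x * (starRingEnd ℂ) (y x)
        = -(ω ^ 2) * ((B x * Complex.normSq (y x) : ℝ) : ℂ) := by
      intro x
      have : f x * (starRingEnd ℂ) (y x)
          = -(ω ^ 2) * ((B x : ℂ) * (y x * (starRingEnd ℂ) (y x))) := by
        rw [hfdef]; ring
      rw [this, Complex.mul_conj]
      push_cast
      ring
    simp_rw [e]
    rw [intervalIntegral.integral_const_mul, intervalIntegral.integral_ofReal]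
  have hBq : ∫ x in a₁..a₂, g x * (starRingEnd ℂ) (g x) = (Q : ℂ) := by
    have e : ∀ x : ℝ, g x * (starRingEnd ℂ) (g x) = ((Complex.normSq (g x) : ℝ) : ℂ) := by
      intro x
      rw [Complex.mul_conj]
    simp_rw [e]
    rw [intervalIntegral.integral_ofReal]
  have hsplit : ∫ x in a₁..a₂, (f x * (starRingEnd ℂ) (y x) + g x * (starRingEnd ℂ) (g x))
      = (∫ x in a₁..a₂, f x * (starRingEnd ℂ) (y x))
        + ∫ x in a₁..a₂, g x * (starRingEnd ℂ) (g x) :=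
    intervalIntegral.integral_add hfy_int hgg_int
  -- boundary terms
  have hIω : Complex.I * ω ≠ 0 := mul_ne_zero Complex.I_ne_zero hω
  obtain ⟨R, hR0, hRform, hRz⟩ : ∃ R : ℝ, 0 ≤ R ∧
      (g a₂ * (starRingEnd ℂ) (y a₂) - g a₁ * (starRingEnd ℂ) (y a₁)
        = Complex.I * ω * (R : ℂ)) ∧
      (R = 0 → (y a₁ = 0 ∧ g a₁ = 0) ∨ (y a₂ = 0 ∧ g a₂ = 0)) := by
    have hterm1 : -(g a₁ * (starRingEnd ℂ) (y a₁))
        = Complex.I * ω * ((ν₁ * Complex.normSq (y a₁) : ℝ) : ℂ) := by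
      rw [hbc1]
      have : -(-Complex.I * ω * (ν₁ : ℂ) * y a₁ * (starRingEnd ℂ) (y a₁))
          = Complex.I * ω * ((ν₁ : ℂ) * (y a₁ * (starRingEnd ℂ) (y a₁))) := by ring
      rw [this, Complex.mul_conj]
      push_cast
      ring
    rcases eq_or_lt_of_le hμ₂ with hμz | hμpos
    · -- μ₂ = 0 : Dirichlet at a₂, and ν₁ > 0
      have hν₁pos : ν₁ ≠ 0 := fun h => hne ⟨h, hμz.symm⟩
      have hya₂ : y a₂ = 0 := by
        have : Complex.I * ω * y a₂ = 0 := by rw [← hbc2, ← hμz]; simp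
        rcases mul_eq_zero.mp this with h | h
        · exact absurd h hIω
        · exact h
      refine ⟨ν₁ * Complex.normSq (y a₁), mul_nonneg hν₁ (Complex.normSq_nonneg _), ?_, ?_⟩
      · rw [hya₂, map_zero, mul_zero, zero_sub, hterm1]
      · intro hR
        left
        have hns : Complex.normSq (y a₁) = 0 := by
          rcases mul_eq_zero.mp hR with h | h
          · exact absurd h hν₁pos
          · exact h
        have hy1 : y a₁ = 0 := Complex.normSq_eq_zero.mp hns
        exact ⟨hy1, by rw [hbc1, hy1, mul_zero]⟩
    · -- μ₂ > 0
      have hμne : (μ₂ : ℂ) ≠ 0 := by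
        simp only [ne_eq, Complex.ofReal_eq_zero]
        exact ne_of_gt hμpos
      have hga₂ : g a₂ = Complex.I * ω * y a₂ / (μ₂ : ℂ) := by
        field_simp
        rw [mul_comm] at hbc2
        exact hbc2
      refine ⟨ν₁ * Complex.normSq (y a₁) + Complex.normSq (y a₂) / μ₂, ?_, ?_, ?_⟩
      · have h1 := Complex.normSq_nonneg (y a₁)
        have h2 := Complex.normSq_nonneg (y a₂)
        have := div_nonneg h2 hμ₂
        nlinarith
      · rw [hga₂]
        have : Complex.I * ω * y a₂ / (μ₂ : ℂ) * (starRingEnd ℂ) (y a₂)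
            = Complex.I * ω * ((y a₂ * (starRingEnd ℂ) (y a₂)) / (μ₂ : ℂ)) := by ring
        rw [this, Complex.mul_conj, sub_eq_add_neg, hterm1]
        push_cast
        ring
      · intro hR
        right
        have hns2 : Complex.normSq (y a₂) / μ₂ = 0 := by
          have h1 : 0 ≤ ν₁ * Complex.normSq (y a₁) :=
            mul_nonneg hν₁ (Complex.normSq_nonneg _)
          have h2 : 0 ≤ Complex.normSq (y a₂) / μ₂ :=
            div_nonneg (Complex.normSq_nonneg _) hμ₂
          linarith
        have hy2 : y a₂ = 0 := by
          rw [div_eq_zero_iff] at hns2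
          rcases hns2 with h | h
          · exact Complex.normSq_eq_zero.mp h
          · exact absurd h (ne_of_gt hμpos)
        exact ⟨hy2, by rw [hga₂, hy2, mul_zero, zero_div]⟩
  have hid : -(ω ^ 2) * (P : ℂ) + (Q : ℂ) = Complex.I * ω * (R : ℂ) := by
    rw [← hA, ← hBq, ← hsplit, hIBP, hRform]
  -- positivity of P and Q
  have hP0 : 0 ≤ P := by
    apply intervalIntegral.integral_nonneg_of_ae_restrict h12'
    filter_upwards [hB0] with x hx
    exact mul_nonneg hx (Complex.normSq_nonneg _)
  have hQ0 : 0 ≤ Q :=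
    intervalIntegral.integral_nonneg h12' (fun u _ => Complex.normSq_nonneg _)
  -- take real and imaginary parts
  set σ : ℝ := ω.re with hσdef
  set τ : ℝ := ω.im with hτdef
  have him : -(2 * σ * τ) * P = σ * R := by
    have := congrArg Complex.im hid
    simp only [Complex.add_im, Complex.neg_im, Complex.mul_im, Complex.ofReal_re,
      Complex.ofReal_im, Complex.I_re, Complex.I_im, pow_two, Complex.mul_re,
      Complex.neg_re] at this
    rw [← hσdef, ← hτdef] at this
    linarith
  have hre : -(σ ^ 2 - τ ^ 2) * P + Q = -τ * R := by
    have := congrArg Complex.re hid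
    simp only [Complex.add_re, Complex.neg_re, Complex.mul_re, Complex.ofReal_re,
      Complex.ofReal_im, Complex.I_re, Complex.I_im, pow_two, Complex.mul_im,
      Complex.neg_im] at this
    rw [← hσdef, ← hτdef] at this
    nlinarith [this]
  have hRzero : R = 0 := by
    rcases eq_or_ne σ 0 with hσ0 | hσ0
    · have hτ0 : τ ≠ 0 := by
        intro h
        apply hω
        apply Complex.ext <;> simp [← hσdef, ← hτdef, hσ0, h]
      have hτpos : 0 < τ := lt_of_le_of_ne hcon (Ne.symm hτ0)
      rw [hσ0] at hre
      nlinarith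
    · have h1 : σ * R = σ * (-(2 * τ) * P) := by rw [← him]; ring
      have h2 : R = -(2 * τ) * P := mul_left_cancel₀ hσ0 h1
      nlinarith
  -- conclude via uniqueness
  rcases hRz hRzero with ⟨hy1, hg1⟩ | ⟨hy2, hg2⟩
  · exact hy₀ (myUniqueZero a₁ a₂ h12' B hBint hB0 ω y g hy_cont hg_cont hBy_int
      hy_eq hg_eq a₁ ha₁ hy1 hg1 x₀ hx₀)
  · exact hy₀ (myUniqueZero a₁ a₂ h12' B hBint hB0 ω y g hy_cont hg_cont hBy_int
      hy_eq hg_eq a₂ ha₂ hy2 hg2 x₀ hx₀)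
end

section
/- Let B ≡ b with constant b > 0, b^{1/2} ∉ {ν₁, ν₂}, and suppose K₁ ≠ 1, where K₁ = (1+ν₁/ν₂)/(ν₁/√b + √b/ν₂). Then the quasi-eigenvalues of B on (a₁,a₂) are exactly ωₙ = -(i/(2√b(a₂-a₁))) ln|(1+K₁)/(1-K₁)| + (π/(√b(a₂-a₁)))·m, where m = n if √b ∉ [ν₁,ν₂] and m = n + 1/2 if √b ∈ (ν₁,ν₂), for n ∈ ℤ. -/
open MeasureTheory Set

/-- `K1 ν₁ μ₂ b = (1 + ν₁/ν₂)/(ν₁/√b + √b/ν₂)` written with `μ₂ = 1/ν₂` (so `μ₂ = 0`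
encodes `ν₂ = ∞`, consistent with the convention `1/∞ = 0`). -/
noncomputable def K1 (ν₁ μ₂ b : ℝ) : ℝ :=
  (1 + ν₁ * μ₂) / (ν₁ / Real.sqrt b + Real.sqrt b * μ₂)

section Aux

open Complex

/-- FTC giving a one-sided derivative within `[a,b]` from the integral representation. -/
lemma ftc_within {f F : ℝ → ℂ} {a b : ℝ} (hf : ContinuousOn f (Icc a b)) {C : ℂ}
    (hF : ∀ x ∈ Icc a b, F x = C + ∫ t in a..x, f t) {x : ℝ} (hx : x ∈ Ico a b) :
    HasDerivWithinAt F (f x) (Ici x) x := by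
  have hxI : x ∈ Icc a b := ⟨hx.1, hx.2.le⟩
  have hmem : Icc x b ∈ nhdsWithin x (Ici x) := Icc_mem_nhdsGE_of_mem ⟨le_rfl, hx.2⟩
  have hmem' : Icc a b ∈ nhdsWithin x (Ici x) :=
    Filter.mem_of_superset hmem (Icc_subset_Icc hx.1 le_rfl)
  have hint : IntervalIntegrable f volume a x := by
    apply ContinuousOn.intervalIntegrable
    rw [uIcc_of_le hx.1]
    exact hf.mono (Icc_subset_Icc le_rfl hx.2.le)
  have hmemo : Icc x b ∈ nhdsWithin x (Ioi x) :=
    nhdsWithin_mono x Ioi_subset_Ici_self hmem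
  have hmeas : StronglyMeasurableAtFilter f (nhdsWithin x (Ioi x)) volume :=
    ⟨Icc x b, hmemo, ((hf.mono (Icc_subset_Icc hx.1 le_rfl)).aestronglyMeasurable measurableSet_Icc)⟩
  have hcw : ContinuousWithinAt f (Ioi x) x :=
    ((hf x hxI).mono_of_mem_nhdsWithin hmem').mono Ioi_subset_Ici_self
  have hG : HasDerivWithinAt (fun u => C + ∫ t in a..u, f t) (f x) (Ici x) x :=
    (intervalIntegral.integral_hasDerivWithinAt_right hint hmeas hcw).const_add C
  refine hG.congr_of_eventuallyEq ?_ (hF x hxI)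
  exact Filter.eventuallyEq_of_mem hmem' (fun y hy => hF y hy)

lemma hasDeriv_cosc (c : ℂ) (a : ℝ) (x : ℝ) :
    HasDerivAt (fun u : ℝ => Complex.cos (c * (u - a))) (-(c * Complex.sin (c * (x - a)))) x := by
  have h1 : HasDerivAt (fun u : ℝ => c * ((u : ℂ) - a)) c x := by
    simpa using (((hasDerivAt_id ((x : ℝ) : ℂ)).sub_const (a : ℂ)).const_mul c).comp_ofReal
  refine ((Complex.hasDerivAt_cos (c * ((x : ℂ) - a))).comp x h1).congr_deriv ?_
  ring

lemma hasDeriv_sinc (c : ℂ) (a : ℝ) (x : ℝ) :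
    HasDerivAt (fun u : ℝ => Complex.sin (c * (u - a))) (c * Complex.cos (c * (x - a))) x := by
  have h1 : HasDerivAt (fun u : ℝ => c * ((u : ℂ) - a)) c x := by
    simpa using (((hasDerivAt_id ((x : ℝ) : ℂ)).sub_const (a : ℂ)).const_mul c).comp_ofReal
  refine ((Complex.hasDerivAt_sin (c * ((x : ℂ) - a))).comp x h1).congr_deriv ?_
  ring

lemma cont_cosc (c : ℂ) (a : ℝ) : Continuous fun x : ℝ => Complex.cos (c * ((x : ℂ) - a)) :=
  Complex.continuous_cos.comp (continuous_const.mul (Complex.continuous_ofReal.sub continuous_const))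

lemma cont_sinc (c : ℂ) (a : ℝ) : Continuous fun x : ℝ => Complex.sin (c * ((x : ℂ) - a)) :=
  Complex.continuous_sin.comp (continuous_const.mul (Complex.continuous_ofReal.sub continuous_const))

/-- Any solution of the integral equations is a combination of `cos` and `sin`. -/
lemma solution_form {a₁ a₂ : ℝ} {b : ℝ} {ω c : ℂ} (hc2 : c ^ 2 = ω ^ 2 * b)
    {y g : ℝ → ℂ} (hy : ContinuousOn y (Icc a₁ a₂)) (hg : ContinuousOn g (Icc a₁ a₂))
    (hyi : ∀ x ∈ Icc a₁ a₂, y x = y a₁ + ∫ t in a₁..x, g t)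
    (hgi : ∀ x ∈ Icc a₁ a₂, g x = g a₁ + ∫ t in a₁..x, -(ω ^ 2) * (b : ℂ) * y t) :
    ∀ x ∈ Icc a₁ a₂,
      c * y x = c * y a₁ * Complex.cos (c * (x - a₁)) + g a₁ * Complex.sin (c * (x - a₁)) ∧
      g x = -(c * y a₁ * Complex.sin (c * (x - a₁))) + g a₁ * Complex.cos (c * (x - a₁)) := by
  have hccos : ContinuousOn (fun u : ℝ => Complex.cos (c * (u - a₁))) (Icc a₁ a₂) :=
    (cont_cosc c a₁).continuousOn
  have hcsin : ContinuousOn (fun u : ℝ => Complex.sin (c * (u - a₁))) (Icc a₁ a₂) :=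
    (cont_sinc c a₁).continuousOn
  set E : ℝ → ℂ := fun x => c * y x * Complex.cos (c * (x - a₁)) - g x * Complex.sin (c * (x - a₁))
    with hE
  set F : ℝ → ℂ := fun x => c * y x * Complex.sin (c * (x - a₁)) + g x * Complex.cos (c * (x - a₁))
    with hF
  have hEc : ContinuousOn E (Icc a₁ a₂) := ((continuousOn_const.mul hy).mul hccos).sub (hg.mul hcsin)
  have hFc : ContinuousOn F (Icc a₁ a₂) := ((continuousOn_const.mul hy).mul hcsin).add (hg.mul hccos)
  have hyd : ∀ x ∈ Ico a₁ a₂, HasDerivWithinAt y (g x) (Ici x) x := fun x hx =>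
    ftc_within hg hyi hx
  have hgd : ∀ x ∈ Ico a₁ a₂, HasDerivWithinAt g (-(ω ^ 2) * (b : ℂ) * y x) (Ici x) x := by
    intro x hx
    exact ftc_within (by fun_prop) hgi hx
  have hEconst : ∀ x ∈ Icc a₁ a₂, E x = E a₁ := by
    apply constant_of_has_deriv_right_zero hEc
    intro x hx
    have h := (((hyd x hx).const_mul c).mul ((hasDeriv_cosc c a₁ x).hasDerivWithinAt)).sub
      (((hgd x hx)).mul ((hasDeriv_sinc c a₁ x).hasDerivWithinAt))
    refine h.congr_deriv ?_
    have h2 : -(ω^2) * (b:ℂ) = -c^2 := by rw [hc2]; ring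
    rw [h2]; ring
  have hFconst : ∀ x ∈ Icc a₁ a₂, F x = F a₁ := by
    apply constant_of_has_deriv_right_zero hFc
    intro x hx
    have h := (((hyd x hx).const_mul c).mul ((hasDeriv_sinc c a₁ x).hasDerivWithinAt)).add
      (((hgd x hx)).mul ((hasDeriv_cosc c a₁ x).hasDerivWithinAt))
    refine h.congr_deriv ?_
    have h2 : -(ω^2) * (b:ℂ) = -c^2 := by rw [hc2]; ring
    rw [h2]; ring
  intro x hx
  have hEx := hEconst x hx
  have hFx := hFconst x hx
  have hpy : Complex.cos (c * (x - a₁)) ^ 2 + Complex.sin (c * (x - a₁)) ^ 2 = 1 :=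
    Complex.cos_sq_add_sin_sq _
  simp only [hE, hF, sub_self, Complex.ofReal_zero, mul_zero, Complex.cos_zero,
    Complex.sin_zero, mul_one, mul_zero, sub_zero, add_zero, zero_add] at hEx hFx
  constructor
  · linear_combination Complex.cos (c * (x - a₁)) * hEx + Complex.sin (c * (x - a₁)) * hFx
      - (c * y x) * hpy
  · linear_combination (-Complex.sin (c * (x - a₁))) * hEx + Complex.cos (c * (x - a₁)) * hFx
      - g x * hpy

/-- The characteristic trigonometric equation in exponential form. -/
lemma trig_iff (K z : ℂ) :
    Complex.sin z + Complex.I * K * Complex.cos z = 0 ↔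
      Complex.exp (2 * z * Complex.I) * (1 - K) = 1 + K := by
  have hpy : Complex.cos z ^ 2 + Complex.sin z ^ 2 = 1 := Complex.cos_sq_add_sin_sq z
  have hE : Complex.exp (2 * z * I) = (Complex.cos z + Complex.sin z * I) ^ 2 := by
    rw [show (2:ℂ) * z * I = z * I + z * I by ring, Complex.exp_add, Complex.exp_mul_I]
    ring
  rw [hE]
  constructor
  · intro h
    linear_combination (-2*Complex.sin z + 2*I*Complex.cos z) * h + (1+K) * hpy +
      ((1-K)*Complex.sin z^2 - 2*K*Complex.cos z^2) * Complex.I_sq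
  · intro h2
    have h0 : (Complex.sin z + I * K * Complex.cos z) * (-2*Complex.sin z + 2*I*Complex.cos z) = 0 := by
      linear_combination h2 - (1+K) * hpy - ((1-K)*Complex.sin z^2 - 2*K*Complex.cos z^2) * Complex.I_sq
    rcases mul_eq_zero.mp h0 with h | h
    · exact h
    · exfalso
      have : (0:ℂ) = 1 := by
        linear_combination (1 : ℂ) * hpy + ((Complex.sin z + I*Complex.cos z)/2) * h
          + (-(Complex.cos z^2)) * Complex.I_sq
      exact one_ne_zero this.symm

lemma exp_eq_ofReal_pos {R : ℝ} (hR : 0 < R) {w : ℂ} :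
    Complex.exp w = (R : ℂ) ↔
      ∃ n : ℤ, w = ((Real.log R : ℝ) : ℂ) + (n : ℂ) * (2 * (Real.pi : ℂ) * Complex.I) := by
  rw [show ((R:ℝ):ℂ) = Complex.exp ((Real.log R : ℝ) : ℂ) by
      rw [← Complex.ofReal_exp, Real.exp_log hR], Complex.exp_eq_exp_iff_exists_int]

lemma exp_eq_ofReal_neg {R : ℝ} (hR : R < 0) {w : ℂ} :
    Complex.exp w = (R : ℂ) ↔
      ∃ n : ℤ, w = ((Real.log (-R) : ℝ) : ℂ) + (2*(n:ℂ)+1) * (Real.pi : ℂ) * Complex.I := by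
  have h1 : ((R:ℝ):ℂ) = Complex.exp (((Real.log (-R) : ℝ) : ℂ) + (Real.pi:ℂ) * Complex.I) := by
    rw [Complex.exp_add, Complex.exp_pi_mul_I, ← Complex.ofReal_exp, Real.exp_log (neg_pos.2 hR)]
    push_cast
    ring
  rw [h1, Complex.exp_eq_exp_iff_exists_int]
  refine exists_congr fun n => ?_
  constructor <;> intro h <;> (rw [h]; ring)

/-- Converting the explicit form of `ω` into a linear equation. -/
lemma omega_iff {s L lR p : ℝ} (hs : s ≠ 0) (hL : L ≠ 0) (ω : ℂ) (m : ℝ) :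
    ω = -(Complex.I * ((lR / (2*s*L) : ℝ) : ℂ)) + ((p/(s*L) * m : ℝ) : ℂ) ↔
      ω * (s:ℂ) * (L:ℂ) = (lR:ℂ) * (-Complex.I/2) + (m:ℂ) * (p:ℂ) := by
  have hsC : (s:ℂ) ≠ 0 := Complex.ofReal_ne_zero.2 hs
  have hLC : (L:ℂ) ≠ 0 := Complex.ofReal_ne_zero.2 hL
  have hX : (-(Complex.I * ((lR / (2*s*L) : ℝ) : ℂ)) + ((p/(s*L) * m : ℝ) : ℂ)) * ((s:ℂ)*(L:ℂ))
      = (lR:ℂ) * (-Complex.I/2) + (m:ℂ) * (p:ℂ) := by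
    push_cast
    field_simp
  constructor
  · intro h
    have h2 := congrArg (fun t => t * ((s:ℂ)*(L:ℂ))) h
    rw [hX] at h2
    linear_combination h2
  · intro h
    apply mul_right_cancel₀ (mul_ne_zero hsC hLC)
    rw [hX]
    linear_combination h

/-- Construction of a mode from the boundary condition at `a₂`. -/
lemma mode_of_bc {a₁ a₂ : ℝ} (h12 : a₁ < a₂) {b s ν₁ μ₂ : ℝ} (hs : 0 < s) (hs2 : s^2 = b)
    {ω : ℂ} (hω : ω ≠ 0)
    (hbc : (μ₂:ℂ) * (-(ω*(s:ℂ))^2 * Complex.sin (ω*(s:ℂ)*((a₂:ℂ)-(a₁:ℂ)))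
        - Complex.I*ω*(ν₁:ℂ)*(ω*(s:ℂ))*Complex.cos (ω*(s:ℂ)*((a₂:ℂ)-(a₁:ℂ))))
      = Complex.I*ω*(ω*(s:ℂ)*Complex.cos (ω*(s:ℂ)*((a₂:ℂ)-(a₁:ℂ)))
        - Complex.I*ω*(ν₁:ℂ)*Complex.sin (ω*(s:ℂ)*((a₂:ℂ)-(a₁:ℂ))))) :
    ∃ y g : ℝ → ℂ, IsMode a₁ a₂ (fun _ => b) ν₁ μ₂ ω y g := by
  set c : ℂ := ω * (s:ℂ) with hc
  have hc0 : c ≠ 0 := mul_ne_zero hω (Complex.ofReal_ne_zero.2 hs.ne')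
  have hc2 : c ^ 2 = ω ^ 2 * (b:ℂ) := by
    rw [hc, mul_pow, ← Complex.ofReal_pow, hs2]
  refine ⟨fun x => c * Complex.cos (c * ((x:ℂ) - a₁)) - Complex.I*ω*(ν₁:ℂ) * Complex.sin (c * ((x:ℂ) - a₁)),
    fun x => -(c^2) * Complex.sin (c * ((x:ℂ) - a₁)) - Complex.I*ω*(ν₁:ℂ)*c * Complex.cos (c * ((x:ℂ) - a₁)),
    ?_, ?_, ?_, ?_, ?_, ?_, ?_, ?_⟩
  · exact ((continuous_const.mul (cont_cosc c a₁)).sub (continuous_const.mul (cont_sinc c a₁))).continuousOn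
  · exact ((continuous_const.mul (cont_sinc c a₁)).sub (continuous_const.mul (cont_cosc c a₁))).continuousOn
  · exact (continuous_const.mul ((continuous_const.mul (cont_cosc c a₁)).sub
      (continuous_const.mul (cont_sinc c a₁)))).integrableOn_Icc
  · intro x hx
    have hder : ∀ t : ℝ, HasDerivAt (fun u : ℝ => c * Complex.cos (c * ((u:ℂ) - a₁))
        - Complex.I*ω*(ν₁:ℂ) * Complex.sin (c * ((u:ℂ) - a₁)))
        (-(c^2) * Complex.sin (c * ((t:ℂ) - a₁)) - Complex.I*ω*(ν₁:ℂ)*c * Complex.cos (c * ((t:ℂ) - a₁))) t := by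
      intro t
      have h := ((hasDeriv_cosc c a₁ t).const_mul c).sub ((hasDeriv_sinc c a₁ t).const_mul (Complex.I*ω*(ν₁:ℂ)))
      refine h.congr_deriv ?_
      ring
    have hint : IntervalIntegrable (fun u : ℝ => -(c^2) * Complex.sin (c * ((u:ℂ) - a₁))
        - Complex.I*ω*(ν₁:ℂ)*c * Complex.cos (c * ((u:ℂ) - a₁))) volume a₁ x :=
      (((continuous_const.mul (cont_sinc c a₁)).sub (continuous_const.mul (cont_cosc c a₁)))).intervalIntegrable _ _
    rw [intervalIntegral.integral_eq_sub_of_hasDerivAt (fun t _ => hder t) hint]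
    ring
  · intro x hx
    have hder : ∀ t : ℝ, HasDerivAt (fun u : ℝ => -(c^2) * Complex.sin (c * ((u:ℂ) - a₁))
        - Complex.I*ω*(ν₁:ℂ)*c * Complex.cos (c * ((u:ℂ) - a₁)))
        (-(ω^2) * ((b:ℝ):ℂ) * (c * Complex.cos (c * ((t:ℂ) - a₁)) - Complex.I*ω*(ν₁:ℂ) * Complex.sin (c * ((t:ℂ) - a₁)))) t := by
      intro t
      have h := ((hasDeriv_sinc c a₁ t).const_mul (-(c^2))).sub ((hasDeriv_cosc c a₁ t).const_mul (Complex.I*ω*(ν₁:ℂ)*c))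
      refine h.congr_deriv ?_
      have h2 : -(ω^2) * ((b:ℝ):ℂ) = -c^2 := by rw [hc2]; ring
      rw [h2]; ring
    have hint : IntervalIntegrable (fun t : ℝ => -(ω^2) * ((b:ℝ):ℂ) * (c * Complex.cos (c * ((t:ℂ) - a₁))
        - Complex.I*ω*(ν₁:ℂ) * Complex.sin (c * ((t:ℂ) - a₁)))) volume a₁ x :=
      (continuous_const.mul ((continuous_const.mul (cont_cosc c a₁)).sub
        (continuous_const.mul (cont_sinc c a₁)))).intervalIntegrable _ _
    rw [intervalIntegral.integral_eq_sub_of_hasDerivAt (fun t _ => hder t) hint]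
    ring
  · simp only [sub_self, Complex.ofReal_zero]
    norm_num [Complex.cos_zero, Complex.sin_zero]
  · simpa using hbc
  · exact ⟨a₁, ⟨le_rfl, h12.le⟩, by
      simp only [sub_self, Complex.ofReal_zero]
      norm_num [Complex.cos_zero, Complex.sin_zero]
      exact hc0⟩

end Aux

/-- Explicit quasi-eigenvalues of the homogeneous structure `B ≡ b`, `b > 0`,
`√b ∉ {ν₁, ν₂}` (the case `K₁ ≠ 1`).  Here `μ₂ = 1/ν₂`, so `√b ≠ ν₂` reads
`√b * μ₂ ≠ 1`, and `√b ∈ (ν₁,ν₂)` reads `ν₁ < √b ∧ √b * μ₂ < 1`. -/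
theorem stmt3 (a₁ a₂ : ℝ) (h12 : a₁ < a₂) (ν₁ μ₂ : ℝ) (hν₁ : 0 ≤ ν₁) (hμ₂ : 0 ≤ μ₂)
    (hne : ¬(ν₁ = 0 ∧ μ₂ = 0)) (hle : ν₁ * μ₂ ≤ 1) (b : ℝ) (hb : 0 < b)
    (h1 : Real.sqrt b ≠ ν₁) (h2 : Real.sqrt b * μ₂ ≠ 1)
    (hK : K1 ν₁ μ₂ b ≠ 1) :
    {ω : ℂ | IsQuasiEigenvalue a₁ a₂ (fun _ => b) ν₁ μ₂ ω} =
      {ω : ℂ | ∃ n : ℤ,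
        ω = -(Complex.I *
              ((Real.log |(1 + K1 ν₁ μ₂ b) / (1 - K1 ν₁ μ₂ b)| /
                (2 * Real.sqrt b * (a₂ - a₁)) : ℝ) : ℂ))
          + ((Real.pi / (Real.sqrt b * (a₂ - a₁)) *
              (if ν₁ < Real.sqrt b ∧ Real.sqrt b * μ₂ < 1 then (n : ℝ) + 1 / 2
               else (n : ℝ)) : ℝ) : ℂ)} := by
  have hs : 0 < Real.sqrt b := Real.sqrt_pos.2 hb
  set s := Real.sqrt b with hsdef
  have hs2 : s ^ 2 = b := Real.sq_sqrt hb.le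
  set K := K1 ν₁ μ₂ b with hKdef
  set D : ℝ := ν₁ / s + s * μ₂ with hDdef
  have hKfrac : K = (1 + ν₁ * μ₂) / D := rfl
  have hL : 0 < a₂ - a₁ := sub_pos.2 h12
  have hD : 0 < D := by
    rcases hν₁.eq_or_lt with h | h
    · have hμ : 0 < μ₂ := lt_of_le_of_ne hμ₂ (fun hh => hne ⟨h.symm, hh.symm⟩)
      rw [hDdef, ← h]
      simp
      positivity
    · have : 0 < ν₁ / s := div_pos h hs
      have : 0 ≤ s * μ₂ := by positivity
      rw [hDdef]; linarith [div_pos h hs]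
  have hK0 : 0 < K := by
    rw [hKfrac]
    apply div_pos (by nlinarith) hD
  have hKD : K * D = 1 + ν₁ * μ₂ := by
    rw [hKfrac]; field_simp
  have hsD : s * D = ν₁ + b * μ₂ := by
    rw [hDdef]
    field_simp
    nlinarith [hs2]
  -- sign dichotomy
  have hiff : (ν₁ < s ∧ s * μ₂ < 1) ↔ 1 < K := by
    constructor
    · rintro ⟨ha, hb'⟩
      rw [hKfrac, lt_div_iff₀ hD]
      have hkey : D * s = ν₁ + s^2 * μ₂ := by rw [hDdef]; field_simp
      have : D * s < (1 + ν₁*μ₂) * s := by nlinarith [mul_pos (sub_pos.2 ha) (sub_pos.2 hb')]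
      calc 1 * D = D := one_mul D
        _ < 1 + ν₁ * μ₂ := by nlinarith
    · intro h3
      by_contra hcon
      rw [not_and_or, not_lt, not_lt] at hcon
      have hKlt : K < 1 → False := fun hh => absurd h3 (by linarith)
      have hkey : D * s = ν₁ + s^2 * μ₂ := by rw [hDdef]; field_simp
      rcases hcon with hca | hca
      · -- s ≤ ν₁, so s < ν₁
        have hsv : s < ν₁ := lt_of_le_of_ne hca h1
        have hsm : s * μ₂ < 1 := by
          rcases lt_trichotomy (s * μ₂) 1 with hx | hx | hx
          · exact hx
          · exact absurd hx h2
          · exfalso; nlinarith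
        apply hKlt
        rw [hKfrac, div_lt_one hD]
        nlinarith [mul_pos (sub_pos.2 hsv) (sub_pos.2 hsm)]
      · -- 1 ≤ s μ₂, so 1 < s μ₂
        have hsm : 1 < s * μ₂ := lt_of_le_of_ne hca (Ne.symm h2)
        have hsv : ν₁ < s := by
          rcases lt_trichotomy ν₁ s with hx | hx | hx
          · exact hx
          · exact absurd hx.symm h1
          · exfalso; nlinarith
        apply hKlt
        rw [hKfrac, div_lt_one hD]
        nlinarith [mul_pos (sub_pos.2 hsv) (sub_pos.2 (lt_of_lt_of_le zero_lt_one hca))]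
  have h1K : (0:ℝ) < 1 + K := by linarith
  have h1mK : (1:ℝ) - K ≠ 0 := sub_ne_zero.2 (fun h => hK h.symm)
  set R : ℝ := (1 + K) / (1 - K) with hRdef
  have habs : |(1 + K) / (1 - K)| = |R| := rfl
  have hlR : 0 < Real.log |R| := by
    apply Real.log_pos
    rw [hRdef, abs_div, abs_of_pos h1K, lt_div_iff₀ (abs_pos.2 h1mK), one_mul]
    rcases abs_cases (1 - K) with ⟨hh, _⟩ | ⟨hh, _⟩ <;> rw [hh] <;> linarith
  -- complex nonzero facts
  have hsC : ((s:ℝ):ℂ) ≠ 0 := Complex.ofReal_ne_zero.2 hs.ne'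
  have hLC : (((a₂ - a₁ : ℝ)):ℂ) ≠ 0 := Complex.ofReal_ne_zero.2 hL.ne'
  have hDC : ((D:ℝ):ℂ) ≠ 0 := Complex.ofReal_ne_zero.2 hD.ne'
  have hKDc : ((K:ℝ):ℂ) * ((D:ℝ):ℂ) = 1 + ((ν₁:ℝ):ℂ) * ((μ₂:ℝ):ℂ) := by
    exact_mod_cast congrArg (fun t : ℝ => (t:ℂ)) hKD
  have hsDc : ((s:ℝ):ℂ) * ((D:ℝ):ℂ) = ((ν₁:ℝ):ℂ) + ((b:ℝ):ℂ) * ((μ₂:ℝ):ℂ) := by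
    exact_mod_cast congrArg (fun t : ℝ => (t:ℂ)) hsD
  have hs2c : ((s:ℝ):ℂ)^2 = ((b:ℝ):ℂ) := by
    exact_mod_cast congrArg (fun t : ℝ => (t:ℂ)) hs2
  have h1mKc : (1:ℂ) - (K:ℂ) ≠ 0 := by
    intro h
    apply h1mK
    exact_mod_cast h
  -- the characteristic equation
  have hchar : ∀ ω : ℂ, ω ≠ 0 →
      ((∃ y g : ℝ → ℂ, IsMode a₁ a₂ (fun _ => b) ν₁ μ₂ ω y g) ↔
        Complex.exp (2 * (ω * (s:ℂ) * ((a₂:ℂ) - (a₁:ℂ))) * Complex.I) = (R:ℂ)) := by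
    intro ω hω0
    have hc2 : (ω * (s:ℂ)) ^ 2 = ω ^ 2 * (b:ℂ) := by
      rw [mul_pow, ← Complex.ofReal_pow, hs2]
    set z : ℂ := ω * (s:ℂ) * ((a₂:ℂ) - (a₁:ℂ)) with hz
    constructor
    · rintro ⟨y, g, hyc, hgc, _, hyi, hgi, hbc1, hbc2, x₀, hx₀, hy₀⟩
      have hgi' : ∀ x ∈ Icc a₁ a₂, g x = g a₁ + ∫ t in a₁..x, -(ω ^ 2) * (b : ℂ) * y t := hgi
      have hsf := solution_form hc2 hyc hgc hyi hgi'
      have hy1 : y a₁ ≠ 0 := by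
        intro h0
        have hg1 : g a₁ = 0 := by rw [hbc1, h0, mul_zero]
        apply hy₀
        have := (hsf x₀ hx₀).1
        rw [h0, hg1] at this
        simp only [mul_zero, zero_mul, zero_add, add_zero] at this
        exact (mul_eq_zero.mp this).resolve_left (mul_ne_zero hω0 hsC)
      have he := hsf a₂ ⟨h12.le, le_rfl⟩
      have e1 := he.1
      have e2 := he.2
      -- derive the trig equation
      have key : (y a₁) * ω^2 * (s:ℂ) * (D:ℂ) *
          (Complex.sin z + Complex.I * (K:ℂ) * Complex.cos z) = 0 := by
        rw [hz]
        linear_combination (y a₁*ω^2*Complex.sin (ω * (s:ℂ) * ((a₂:ℂ) - (a₁:ℂ))))*hsDc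
          + (Complex.I*y a₁*ω^2*(s:ℂ)*Complex.cos (ω * (s:ℂ) * ((a₂:ℂ) - (a₁:ℂ))))*hKDc
          - (ω*(s:ℂ))*hbc2 + (ω*(s:ℂ)*(μ₂:ℂ))*e2
          - (ω^2*(μ₂:ℂ)*y a₁*Complex.sin (ω * (s:ℂ) * ((a₂:ℂ) - (a₁:ℂ))))*hs2c
          + (ω*(s:ℂ)*(μ₂:ℂ)*Complex.cos (ω * (s:ℂ) * ((a₂:ℂ) - (a₁:ℂ)))
              - Complex.I*ω*Complex.sin (ω * (s:ℂ) * ((a₂:ℂ) - (a₁:ℂ))))*hbc1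
          - (Complex.I*ω)*e1
          + (ω^2*(ν₁:ℂ)*y a₁*Complex.sin (ω * (s:ℂ) * ((a₂:ℂ) - (a₁:ℂ))))*Complex.I_sq
      have htrig : Complex.sin z + Complex.I * (K:ℂ) * Complex.cos z = 0 := by
        have hprod : (y a₁) * ω^2 * (s:ℂ) * (D:ℂ) ≠ 0 :=
          mul_ne_zero (mul_ne_zero (mul_ne_zero hy1 (pow_ne_zero 2 hω0)) hsC) hDC
        exact (mul_eq_zero.mp key).resolve_left hprod
      have hexp := (trig_iff (K:ℂ) z).mp htrig
      rw [hRdef]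
      push_cast
      rw [eq_div_iff h1mKc]
      exact hexp
    · intro hexp
      have hexp2 : Complex.exp (2 * z * Complex.I) * (1 - (K:ℂ)) = 1 + (K:ℂ) := by
        rw [hexp, hRdef]
        push_cast
        field_simp
      have htrig := (trig_iff (K:ℂ) z).mpr hexp2
      apply mode_of_bc h12 hs hs2 hω0
      rw [hz] at htrig
      linear_combination (-(ω^2*(s:ℂ)*(D:ℂ)))*htrig
        + (ω^2*Complex.sin (ω * (s:ℂ) * ((a₂:ℂ) - (a₁:ℂ))))*hsDc
        - ((μ₂:ℂ)*ω^2*Complex.sin (ω * (s:ℂ) * ((a₂:ℂ) - (a₁:ℂ))))*hs2c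
        + (Complex.I*ω^2*(s:ℂ)*Complex.cos (ω * (s:ℂ) * ((a₂:ℂ) - (a₁:ℂ))))*hKDc
        + (ω^2*(ν₁:ℂ)*Complex.sin (ω * (s:ℂ) * ((a₂:ℂ) - (a₁:ℂ))))*Complex.I_sq
  -- now the set equality
  ext ω
  simp only [Set.mem_setOf_eq]
  constructor
  · rintro ⟨hω0, hmode⟩
    have hexp := (hchar ω hω0).mp hmode
    rcases lt_or_gt_of_ne hK with hKlt | hKgt
    · -- K < 1 : R > 0, else branch
      have hRpos : 0 < R := by rw [hRdef]; apply div_pos h1K; linarith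
      have hifneg : ¬ (ν₁ < s ∧ s * μ₂ < 1) := fun h => absurd (hiff.mp h) (by linarith)
      obtain ⟨n, hn⟩ := (exp_eq_ofReal_pos hRpos).mp hexp
      refine ⟨n, ?_⟩
      rw [if_neg hifneg]
      rw [abs_of_pos hRpos]
      rw [omega_iff hs.ne' hL.ne' ω (n:ℝ)]
      push_cast
      push_cast at hn
      linear_combination (-Complex.I/2)*hn
        + (ω*(s:ℂ)*((a₂:ℂ)-(a₁:ℂ)) - (n:ℂ)*(Real.pi:ℂ))*Complex.I_sq
    · -- K > 1 : R < 0, if branch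
      have hRneg : R < 0 := by
        rw [hRdef]
        apply div_neg_of_pos_of_neg h1K
        linarith
      have hifpos : ν₁ < s ∧ s * μ₂ < 1 := hiff.mpr hKgt
      obtain ⟨n, hn⟩ := (exp_eq_ofReal_neg hRneg).mp hexp
      refine ⟨n, ?_⟩
      rw [if_pos hifpos]
      rw [abs_of_neg hRneg]
      rw [omega_iff hs.ne' hL.ne' ω ((n:ℝ) + 1/2)]
      push_cast
      push_cast at hn
      linear_combination (-Complex.I/2)*hn
        + (ω*(s:ℂ)*((a₂:ℂ)-(a₁:ℂ)) - ((n:ℂ)+1/2)*(Real.pi:ℂ))*Complex.I_sq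
  · rintro ⟨n, hω⟩
    -- first : ω ≠ 0
    have hr : 0 < Real.log |R| / (2 * s * (a₂ - a₁)) := by
      apply div_pos hlR
      positivity
    have hω0 : ω ≠ 0 := by
      have him : ω.im = -(Real.log |R| / (2 * s * (a₂ - a₁))) := by
        rw [hω]
        simp only [Complex.add_im, Complex.neg_im, Complex.mul_im, Complex.I_re, Complex.I_im,
          Complex.ofReal_re, Complex.ofReal_im, mul_zero, zero_mul, one_mul, add_zero, zero_add]
      intro h
      rw [h] at him
      simp only [Complex.zero_im] at him
      linarith
    refine ⟨hω0, (hchar ω hω0).mpr ?_⟩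
    rcases lt_or_gt_of_ne hK with hKlt | hKgt
    · have hRpos : 0 < R := by rw [hRdef]; apply div_pos h1K; linarith
      have hifneg : ¬ (ν₁ < s ∧ s * μ₂ < 1) := fun h => absurd (hiff.mp h) (by linarith)
      rw [if_neg hifneg, abs_of_pos hRpos] at hω
      have hu := (omega_iff hs.ne' hL.ne' ω (n:ℝ)).mp hω
      apply (exp_eq_ofReal_pos hRpos).mpr
      refine ⟨n, ?_⟩
      push_cast
      push_cast at hu
      linear_combination 2*Complex.I*hu + (-(Real.log R : ℂ))*Complex.I_sq
    · have hRneg : R < 0 := by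
        rw [hRdef]
        apply div_neg_of_pos_of_neg h1K
        linarith
      have hifpos : ν₁ < s ∧ s * μ₂ < 1 := hiff.mpr hKgt
      rw [if_pos hifpos, abs_of_neg hRneg] at hω
      have hu := (omega_iff hs.ne' hL.ne' ω ((n:ℝ) + 1/2)).mp hω
      apply (exp_eq_ofReal_neg hRneg).mpr
      refine ⟨n, ?_⟩
      push_cast
      push_cast at hu
      linear_combination 2*Complex.I*hu + (-(Real.log (-R) : ℂ))*Complex.I_sq
end

section
/- If b^{1/2} = ν₁ or b^{1/2} = ν₂ (with b > 0 constant), then the constant structure B ≡ b has no quasi-eigenvalues: Σ(b) = ∅. -/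
open MeasureTheory Set

/-- Solutions of the integral equation `w x = w a₁ + ∫ c * w` are exponentials. -/
lemma linODE_exp (a₁ a₂ : ℝ) (c : ℂ) (w : ℝ → ℂ)
    (hw : ContinuousOn w (Set.Icc a₁ a₂))
    (hint : ∀ x ∈ Set.Icc a₁ a₂, w x = w a₁ + ∫ t in a₁..x, c * w t) :
    ∀ x ∈ Set.Icc a₁ a₂, w x = w a₁ * Complex.exp (c * (x - a₁)) := by
  have hf : ContinuousOn (fun t => c * w t) (Set.Icc a₁ a₂) :=
    continuousOn_const.mul hw
  set φ : ℝ → ℂ := fun x => w x * Complex.exp (-(c * x)) with hφdef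
  have hφcont : ContinuousOn φ (Set.Icc a₁ a₂) :=
    hw.mul ((Complex.continuous_exp.comp
      (continuous_const.mul Complex.continuous_ofReal).neg).continuousOn)
  have hconst : ∀ x ∈ Set.Icc a₁ a₂, φ x = φ a₁ := by
    apply constant_of_has_deriv_right_zero hφcont
    intro x hx
    obtain ⟨hx1, hx2⟩ := hx
    have hii : IntervalIntegrable (fun t => c * w t) volume a₁ x :=
      (hf.mono (by rw [Set.uIcc_of_le hx1]; exact Set.Icc_subset_Icc le_rfl hx2.le)).intervalIntegrable
    have hmeas : StronglyMeasurableAtFilter (fun t => c * w t) (nhdsWithin x (Set.Ioi x)) volume := by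
      refine ⟨Set.Ioc x a₂, Ioc_mem_nhdsGT_of_mem ⟨le_rfl, hx2⟩, ?_⟩
      exact (hf.mono (fun t ht => ⟨hx1.trans ht.1.le, ht.2⟩)).aestronglyMeasurable measurableSet_Ioc
    have hcw : ContinuousWithinAt (fun t => c * w t) (Set.Ioi x) x := by
      have h0 : ContinuousWithinAt (fun t => c * w t) (Set.Ioc x a₂) x :=
        (hf x ⟨hx1, hx2.le⟩).mono (fun t ht => ⟨hx1.trans ht.1.le, ht.2⟩)
      unfold ContinuousWithinAt at h0 ⊢
      rwa [← nhdsWithin_Ioc_eq_nhdsGT hx2]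
    have hW : HasDerivWithinAt (fun u => w a₁ + ∫ t in a₁..u, c * w t) (c * w x)
        (Set.Ici x) x :=
      ((intervalIntegral.integral_hasDerivWithinAt_right hii hmeas hcw).const_add (w a₁))
    have hE : HasDerivWithinAt (fun u : ℝ => Complex.exp (-(c * u)))
        (-c * Complex.exp (-(c * x))) (Set.Ici x) x := by
      have h1 : HasDerivWithinAt (fun u : ℝ => -(c * u)) (-c) (Set.Ici x) x := by
        simpa [Pi.neg_def] using ((Complex.ofRealCLM.hasDerivAt (x := x)).const_mul c).neg.hasDerivWithinAt
      simpa [mul_comm] using h1.cexp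
    have hprod := hW.mul hE
    have hEq : Set.EqOn φ (fun u => (w a₁ + ∫ t in a₁..u, c * w t) * Complex.exp (-(c * u)))
        (Set.Icc a₁ a₂) := by
      intro u hu
      simp only [hφdef]
      rw [← hint u hu]
    have hmem : Set.Icc a₁ a₂ ∈ nhdsWithin x (Set.Ici x) := by
      have : Set.Icc x a₂ ∈ nhdsWithin x (Set.Ici x) := Icc_mem_nhdsGE_of_mem ⟨le_rfl, hx2⟩
      exact Filter.mem_of_superset this (Set.Icc_subset_Icc hx1 le_rfl)
    have hφderiv : HasDerivWithinAt φ
        (c * w x * Complex.exp (-(c * x)) +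
          (w a₁ + ∫ t in a₁..x, c * w t) * (-c * Complex.exp (-(c * x)))) (Set.Ici x) x := by
      apply hprod.congr_of_eventuallyEq
      · exact Filter.eventuallyEq_of_mem hmem hEq
      · exact hEq ⟨hx1, hx2.le⟩
    have hwx : (w a₁ + ∫ t in a₁..x, c * w t) = w x := (hint x ⟨hx1, hx2.le⟩).symm
    rw [hwx] at hφderiv
    convert hφderiv using 1
    · rfl
    · ring
  intro x hx
  have h := hconst x hx
  simp only [hφdef] at h
  have hexp : Complex.exp (-(c * x)) ≠ 0 := Complex.exp_ne_zero _
  have : w x = w a₁ * Complex.exp (-(c * a₁)) * (Complex.exp (-(c * x)))⁻¹ := by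
    field_simp at h ⊢
    linear_combination h
  rw [this, ← Complex.exp_neg, mul_assoc, ← Complex.exp_add]
  ring_nf

/-- For a mode of the constant structure `b`, the Riemann invariant `g + s y`
(where `s² = -ω² b`) is an exponential. -/
lemma mode_comb (a₁ a₂ : ℝ) (b : ℝ) (ω s : ℂ) (hs : s ^ 2 = -(ω ^ 2) * (b : ℂ))
    (y g : ℝ → ℂ) (hy : ContinuousOn y (Set.Icc a₁ a₂)) (hg : ContinuousOn g (Set.Icc a₁ a₂))
    (hiy : ∀ x ∈ Set.Icc a₁ a₂, y x = y a₁ + ∫ t in a₁..x, g t)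
    (hig : ∀ x ∈ Set.Icc a₁ a₂, g x = g a₁ + ∫ t in a₁..x, -(ω ^ 2) * (b : ℂ) * y t) :
    ∀ x ∈ Set.Icc a₁ a₂, g x + s * y x = (g a₁ + s * y a₁) * Complex.exp (s * (x - a₁)) := by
  apply linODE_exp a₁ a₂ s _ (hg.add (continuousOn_const.mul hy))
  intro x hx
  have hsub : Set.uIcc a₁ x ⊆ Set.Icc a₁ a₂ := by
    rw [Set.uIcc_of_le hx.1]; exact Set.Icc_subset_Icc le_rfl hx.2
  have h1 : IntervalIntegrable (fun t => -(ω ^ 2) * (b : ℂ) * y t) volume a₁ x :=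
    (continuousOn_const.mul (hy.mono hsub)).intervalIntegrable
  have h2 : IntervalIntegrable (fun t => s * g t) volume a₁ x :=
    (continuousOn_const.mul (hg.mono hsub)).intervalIntegrable
  have hsplit : (∫ t in a₁..x, s * (g t + s * y t)) =
      (∫ t in a₁..x, -(ω ^ 2) * (b : ℂ) * y t) + ∫ t in a₁..x, s * g t := by
    rw [← intervalIntegral.integral_add h1 h2]
    apply intervalIntegral.integral_congr
    intro t _
    simp only
    linear_combination y t * hs
  show g x + s * y x = (g a₁ + s * y a₁) + ∫ t in a₁..x, s * (g t + s * y t)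
  rw [hsplit, hig x hx, hiy x hx]
  simp only [intervalIntegral.integral_const_mul]
  ring

/-- If `√b = ν₁` or `√b = ν₂` then the homogeneous structure `B ≡ b` has no
quasi-eigenvalues (`μ₂ = 1/ν₂`, so `√b = ν₂` reads `√b * μ₂ = 1`). -/
theorem stmt4 (a₁ a₂ : ℝ) (h12 : a₁ < a₂) (ν₁ μ₂ : ℝ) (hν₁ : 0 ≤ ν₁) (hμ₂ : 0 ≤ μ₂)
    (hne : ¬(ν₁ = 0 ∧ μ₂ = 0)) (b : ℝ) (hb : 0 < b)
    (hcase : Real.sqrt b = ν₁ ∨ Real.sqrt b * μ₂ = 1) :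
    {ω : ℂ | IsQuasiEigenvalue a₁ a₂ (fun _ => b) ν₁ μ₂ ω} = ∅ := by
  ext ω
  simp only [Set.mem_setOf_eq, Set.mem_empty_iff_false, iff_false]
  rintro ⟨hω, y, g, hy, hg, hBint, hiy, hig, hbc1, hbc2, x₀, hx₀, hyx₀⟩
  set r : ℝ := Real.sqrt b with hr
  have hrpos : 0 < r := Real.sqrt_pos.mpr hb
  have hrsq : (r : ℂ) ^ 2 = (b : ℂ) := by
    have : r ^ 2 = b := Real.sq_sqrt hb.le
    exact_mod_cast this
  set s : ℂ := Complex.I * ω * (r : ℂ) with hsdef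
  have hs2 : s ^ 2 = -(ω ^ 2) * (b : ℂ) := by
    have h0 : s ^ 2 = Complex.I ^ 2 * ω ^ 2 * (r : ℂ) ^ 2 := by rw [hsdef]; ring
    rw [h0, Complex.I_sq, hrsq]; ring
  have hs2' : (-s) ^ 2 = -(ω ^ 2) * (b : ℂ) := by rw [neg_pow]; simpa using hs2
  have hig' : ∀ x ∈ Set.Icc a₁ a₂, g x = g a₁ + ∫ t in a₁..x, -(ω ^ 2) * (b : ℂ) * y t := hig
  have hv := mode_comb a₁ a₂ b ω s hs2 y g hy hg hiy hig'
  have hu := mode_comb a₁ a₂ b ω (-s) hs2' y g hy hg hiy hig'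
  have hmem₁ : a₁ ∈ Set.Icc a₁ a₂ := ⟨le_rfl, h12.le⟩
  have hmem₂ : a₂ ∈ Set.Icc a₁ a₂ := ⟨h12.le, le_rfl⟩
  have hsub : ∀ x ∈ Set.Icc a₁ a₂, Set.uIcc a₁ x ⊆ Set.Icc a₁ a₂ := by
    intro x hx
    rw [Set.uIcc_of_le hx.1]; exact Set.Icc_subset_Icc le_rfl hx.2
  have hIω : Complex.I * ω ≠ 0 := mul_ne_zero Complex.I_ne_zero hω
  rcases hcase with hc1 | hc2
  · -- case √b = ν₁
    have hrν : (r : ℂ) = (ν₁ : ℂ) := by exact_mod_cast hc1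
    have hva₁ : g a₁ + s * y a₁ = 0 := by
      rw [hbc1, hsdef, hrν]; ring
    have hgy : ∀ x ∈ Set.Icc a₁ a₂, g x = -s * y x := by
      intro x hx
      have h := hv x hx
      rw [hva₁, zero_mul] at h
      linear_combination h
    have hyint : ∀ x ∈ Set.Icc a₁ a₂, y x = y a₁ + ∫ t in a₁..x, (-s) * y t := by
      intro x hx
      rw [hiy x hx]
      congr 1
      exact intervalIntegral.integral_congr (fun t ht => hgy t (hsub x hx ht))
    have hyexp := linODE_exp a₁ a₂ (-s) y hy hyint
    have hya₁ : y a₁ ≠ 0 := by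
      intro h0
      exact hyx₀ (by rw [hyexp x₀ hx₀, h0, zero_mul])
    have hya₂ : y a₂ ≠ 0 := by
      rw [hyexp a₂ hmem₂]
      exact mul_ne_zero hya₁ (Complex.exp_ne_zero _)
    have h2 := hbc2
    rw [hgy a₂ hmem₂, hsdef] at h2
    have hfac : Complex.I * ω * y a₂ * (((μ₂ * r : ℝ) : ℂ) + 1) = 0 := by
      push_cast
      linear_combination -h2
    have h3 : ((μ₂ * r : ℝ) : ℂ) + 1 = 0 :=
      (mul_eq_zero.mp hfac).resolve_left (mul_ne_zero hIω hya₂)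
    have h4 : μ₂ * r + 1 = 0 := by exact_mod_cast h3
    nlinarith [mul_nonneg hμ₂ hrpos.le]
  · -- case √b μ₂ = 1
    have hrμ : (r : ℂ) * (μ₂ : ℂ) = 1 := by exact_mod_cast hc2
    have hua₂ : g a₂ + (-s) * y a₂ = 0 := by
      have h3 : g a₂ = Complex.I * ω * (r : ℂ) * y a₂ := by
        linear_combination (r : ℂ) * hbc2 - (g a₂) * hrμ
      rw [h3, hsdef]; ring
    have hua₁ : g a₁ + (-s) * y a₁ = 0 := by
      have h4 := hu a₂ hmem₂
      rw [hua₂] at h4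
      exact (mul_eq_zero.mp h4.symm).resolve_right (Complex.exp_ne_zero _)
    have hya₁ : y a₁ = 0 := by
      rw [hbc1, hsdef] at hua₁
      have hfac : Complex.I * ω * (((ν₁ + r : ℝ)) : ℂ) * y a₁ = 0 := by
        push_cast
        linear_combination -hua₁
      have hνr : (((ν₁ + r : ℝ)) : ℂ) ≠ 0 := by
        have : ν₁ + r ≠ 0 := by positivity
        exact_mod_cast this
      rcases mul_eq_zero.mp hfac with h | h
      · exact absurd h (mul_ne_zero hIω hνr)
      · exact h
    have hgy : ∀ x ∈ Set.Icc a₁ a₂, g x = s * y x := by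
      intro x hx
      have h := hu x hx
      rw [hua₁, zero_mul] at h
      linear_combination h
    have hyint : ∀ x ∈ Set.Icc a₁ a₂, y x = y a₁ + ∫ t in a₁..x, s * y t := by
      intro x hx
      rw [hiy x hx]
      congr 1
      exact intervalIntegral.integral_congr (fun t ht => hgy t (hsub x hx ht))
    have hyexp := linODE_exp a₁ a₂ s y hy hyint
    exact hyx₀ (by rw [hyexp x₀ hx₀, hya₁, zero_mul])
end

section
/- Define recursively ψ₀(x;B) = x - a₁ and ψⱼ(x;B) = ∫_{a₁}^x (x-s) ψ_{j-1}(s;B) B(s) ds for B ∈ L¹(a₁,a₂). Then for all j ≥ 1 and all x ∈ [a₁,a₂], |ψⱼ(x;B)| ≤ ψⱼ(a₂;|B|) ≤ 2ʲ (a₂-a₁)^{j+1} ‖B‖₁ʲ / (2j)!. -/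
open MeasureTheory Set

/-- The iterated kernels `ψⱼ(x;B)` for a complex coefficient `B`. -/
noncomputable def psiC (a₁ : ℝ) (B : ℝ → ℂ) : ℕ → ℝ → ℂ
  | 0, x => ((x - a₁ : ℝ) : ℂ)
  | (j + 1), x => ∫ s in a₁..x, ((x - s : ℝ) : ℂ) * psiC a₁ B j s * B s

/-- The iterated kernels for a real (nonnegative) coefficient. -/
noncomputable def psiR (a₁ : ℝ) (β : ℝ → ℝ) : ℕ → ℝ → ℝ
  | 0, x => x - a₁
  | (j + 1), x => ∫ s in a₁..x, (x - s) * psiR a₁ β j s * β s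

open intervalIntegral

set_option linter.unusedSectionVars false

variable {a₁ a₂ : ℝ}

lemma integOn_mul {E : Type*} [NormedRing E] {g β : ℝ → E}
    (hg : ContinuousOn g (Icc a₁ a₂)) (hβ : IntegrableOn β (Icc a₁ a₂)) :
    IntegrableOn (fun s => g s * β s) (Icc a₁ a₂) := by
  obtain ⟨C, hC⟩ := isCompact_Icc.exists_bound_of_continuousOn hg
  exact Integrable.bdd_mul hβ (hg.aestronglyMeasurable measurableSet_Icc)
    ((ae_restrict_iff' measurableSet_Icc).mpr (ae_of_all _ hC))

lemma ii_of_integOn {E : Type*} [NormedAddCommGroup E] {f : ℝ → E} {x y : ℝ}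
    (hf : IntegrableOn f (Icc a₁ a₂)) (hx : x ∈ Icc a₁ a₂) (hy : y ∈ Icc a₁ a₂) :
    IntervalIntegrable f volume x y :=
  (hf.mono_set (uIcc_subset_Icc hx hy)).intervalIntegrable

lemma psiR_contOn (h12 : a₁ ≤ a₂) {β : ℝ → ℝ} (hβ : IntegrableOn β (Icc a₁ a₂)) :
    ∀ j, ContinuousOn (psiR a₁ β j) (Icc a₁ a₂) := by
  intro j
  induction j with
  | zero => simpa [psiR] using (by fun_prop : Continuous fun x : ℝ => x - a₁).continuousOn
  | succ j ih =>
    have h1 : IntegrableOn (fun s => psiR a₁ β j s * β s) (Icc a₁ a₂) := integOn_mul ih hβ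
    have h2 : IntegrableOn (fun s => s * psiR a₁ β j s * β s) (Icc a₁ a₂) :=
      integOn_mul (continuousOn_id.mul ih) hβ
    have key : ∀ x ∈ Icc a₁ a₂, psiR a₁ β (j + 1) x =
        x * (∫ s in a₁..x, psiR a₁ β j s * β s) - ∫ s in a₁..x, s * psiR a₁ β j s * β s := by
      intro x hx
      have i1 : IntervalIntegrable (fun s => psiR a₁ β j s * β s) volume a₁ x :=
        ii_of_integOn h1 (left_mem_Icc.2 h12) hx
      have i2 : IntervalIntegrable (fun s => s * psiR a₁ β j s * β s) volume a₁ x :=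
        ii_of_integOn h2 (left_mem_Icc.2 h12) hx
      show (∫ s in a₁..x, (x - s) * psiR a₁ β j s * β s) = _
      rw [← intervalIntegral.integral_const_mul, ← intervalIntegral.integral_sub
        (i1.const_mul x) i2]
      congr 1; funext s; ring
    have hF : ContinuousOn (fun x => ∫ s in a₁..x, psiR a₁ β j s * β s) (Icc a₁ a₂) := by
      have := continuousOn_primitive_interval (a := a₁) (b := a₂) (μ := volume)
        (f := fun s => psiR a₁ β j s * β s) (by rwa [uIcc_of_le h12])
      rwa [uIcc_of_le h12] at this
    have hG : ContinuousOn (fun x => ∫ s in a₁..x, s * psiR a₁ β j s * β s) (Icc a₁ a₂) := by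
      have := continuousOn_primitive_interval (a := a₁) (b := a₂) (μ := volume)
        (f := fun s => s * psiR a₁ β j s * β s) (by rwa [uIcc_of_le h12])
      rwa [uIcc_of_le h12] at this
    exact ((continuousOn_id.mul hF).sub hG).congr key


lemma psiC_contOn (h12 : a₁ ≤ a₂) {B : ℝ → ℂ} (hB : IntegrableOn B (Icc a₁ a₂)) :
    ∀ j, ContinuousOn (psiC a₁ B j) (Icc a₁ a₂) := by
  intro j
  induction j with
  | zero =>
    simpa [psiC] using (by fun_prop : Continuous fun x : ℝ => (x : ℂ) - (a₁ : ℂ)).continuousOn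
  | succ j ih =>
    have h1 : IntegrableOn (fun s => psiC a₁ B j s * B s) (Icc a₁ a₂) := integOn_mul ih hB
    have h2 : IntegrableOn (fun (s : ℝ) => (s : ℂ) * psiC a₁ B j s * B s) (Icc a₁ a₂) :=
      integOn_mul ((Complex.continuous_ofReal.continuousOn (s := Icc a₁ a₂)).mul ih) hB
    have key : ∀ x ∈ Icc a₁ a₂, psiC a₁ B (j + 1) x =
        (x : ℂ) * (∫ s in a₁..x, psiC a₁ B j s * B s)
          - ∫ s in a₁..x, (s : ℂ) * psiC a₁ B j s * B s := by
      intro x hx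
      have i1 : IntervalIntegrable (fun s => psiC a₁ B j s * B s) volume a₁ x :=
        ii_of_integOn h1 (left_mem_Icc.2 h12) hx
      have i2 : IntervalIntegrable (fun s => (s : ℂ) * psiC a₁ B j s * B s) volume a₁ x :=
        ii_of_integOn h2 (left_mem_Icc.2 h12) hx
      show (∫ s in a₁..x, ((x - s : ℝ) : ℂ) * psiC a₁ B j s * B s) = _
      rw [← intervalIntegral.integral_const_mul, ← intervalIntegral.integral_sub
        (i1.const_mul _) i2]
      congr 1; funext s; push_cast; ring
    have hF : ContinuousOn (fun x => ∫ s in a₁..x, psiC a₁ B j s * B s) (Icc a₁ a₂) := by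
      have := continuousOn_primitive_interval (a := a₁) (b := a₂) (μ := volume)
        (f := fun s => psiC a₁ B j s * B s) (by rwa [uIcc_of_le h12])
      rwa [uIcc_of_le h12] at this
    have hG : ContinuousOn (fun x => ∫ s in a₁..x, (s : ℂ) * psiC a₁ B j s * B s)
        (Icc a₁ a₂) := by
      have := continuousOn_primitive_interval (a := a₁) (b := a₂) (μ := volume)
        (f := fun s => (s : ℂ) * psiC a₁ B j s * B s) (by rwa [uIcc_of_le h12])
      rwa [uIcc_of_le h12] at this
    exact ((Complex.continuous_ofReal.continuousOn.mul hF).sub hG).congr key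


section
variable (h12 : a₁ ≤ a₂) {β : ℝ → ℝ} (hβ : IntegrableOn β (Icc a₁ a₂))
  (hβ0 : ∀ s, 0 ≤ β s)
include h12 hβ hβ0

lemma psiR_nonneg : ∀ j, ∀ x ∈ Icc a₁ a₂, 0 ≤ psiR a₁ β j x := by
  intro j
  induction j with
  | zero => intro x hx; simpa [psiR] using sub_nonneg.2 hx.1
  | succ j ih =>
    intro x hx
    show 0 ≤ ∫ s in a₁..x, (x - s) * psiR a₁ β j s * β s
    refine intervalIntegral.integral_nonneg hx.1 fun u hu => ?_
    have hu2 : u ∈ Icc a₁ a₂ := ⟨hu.1, hu.2.trans hx.2⟩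
    exact mul_nonneg (mul_nonneg (sub_nonneg.2 hu.2) (ih u hu2)) (hβ0 u)

lemma psiR_mono : ∀ j, ∀ x ∈ Icc a₁ a₂, ∀ y ∈ Icc a₁ a₂, x ≤ y →
    psiR a₁ β j x ≤ psiR a₁ β j y := by
  intro j
  induction j with
  | zero => intro x _ y _ hxy; simpa [psiR] using hxy
  | succ j _ =>
    intro x hx y hy hxy
    have hcont := psiR_contOn h12 hβ j
    have hIx : IntegrableOn (fun s => (x - s) * psiR a₁ β j s * β s) (Icc a₁ a₂) :=
      integOn_mul (g := fun s => (x - s) * psiR a₁ β j s)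
        ((continuous_const.sub continuous_id).continuousOn.mul hcont) hβ
    have hIy : IntegrableOn (fun s => (y - s) * psiR a₁ β j s * β s) (Icc a₁ a₂) :=
      integOn_mul (g := fun s => (y - s) * psiR a₁ β j s)
        ((continuous_const.sub continuous_id).continuousOn.mul hcont) hβ
    have ha₁ : a₁ ∈ Icc a₁ a₂ := left_mem_Icc.2 h12
    calc psiR a₁ β (j + 1) x
        = ∫ s in a₁..x, (x - s) * psiR a₁ β j s * β s := rfl
      _ ≤ ∫ s in a₁..x, (y - s) * psiR a₁ β j s * β s := by
          refine intervalIntegral.integral_mono_on hx.1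
            (ii_of_integOn hIx ha₁ hx) (ii_of_integOn hIy ha₁ hx) fun s hs => ?_
          have hs2 : s ∈ Icc a₁ a₂ := ⟨hs.1, hs.2.trans hx.2⟩
          have h0 := psiR_nonneg h12 hβ hβ0 j s hs2
          exact mul_le_mul_of_nonneg_right
            (mul_le_mul_of_nonneg_right (by linarith) h0) (hβ0 s)
      _ ≤ ∫ s in a₁..y, (y - s) * psiR a₁ β j s * β s := by
          refine intervalIntegral.integral_mono_interval le_rfl hx.1 hxy ?_
            (ii_of_integOn hIy ha₁ hy)
          refine (ae_restrict_iff' measurableSet_Ioc).mpr (ae_of_all _ fun s hs => ?_)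
          have hs2 : s ∈ Icc a₁ a₂ := ⟨hs.1.le, hs.2.trans hy.2⟩
          exact mul_nonneg (mul_nonneg (sub_nonneg.2 hs.2) (psiR_nonneg h12 hβ hβ0 j s hs2))
            (hβ0 s)
      _ = psiR a₁ β (j + 1) y := rfl

end

lemma psiC_abs_le (h12 : a₁ ≤ a₂) {B : ℝ → ℂ} (hB : IntegrableOn B (Icc a₁ a₂)) :
    ∀ j, ∀ x ∈ Icc a₁ a₂,
      ‖psiC a₁ B j x‖ ≤ psiR a₁ (fun s => ‖B s‖) j x := by
  have hβ : IntegrableOn (fun s => ‖B s‖) (Icc a₁ a₂) := by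
    exact hB.norm
  intro j
  induction j with
  | zero =>
    intro x hx
    show ‖((((x : ℝ) - a₁ : ℝ)) : ℂ)‖ ≤ x - a₁
    rw [Complex.norm_real, Real.norm_eq_abs, abs_of_nonneg (sub_nonneg.2 hx.1)]
  | succ j ih =>
    intro x hx
    have ha₁ : a₁ ∈ Icc a₁ a₂ := left_mem_Icc.2 h12
    have hcC := psiC_contOn h12 hB j
    have hcR := psiR_contOn h12 hβ j
    have hIC : IntegrableOn (fun s => ((x - s : ℝ) : ℂ) * psiC a₁ B j s * B s) (Icc a₁ a₂) :=
      integOn_mul (g := fun s => ((x - s : ℝ) : ℂ) * psiC a₁ B j s)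
        ((Complex.continuous_ofReal.comp (continuous_const.sub continuous_id)).continuousOn.mul
          hcC) hB
    have hIR : IntegrableOn (fun s => (x - s) * psiR a₁ (fun u => ‖B u‖) j s *
        ‖B s‖) (Icc a₁ a₂) :=
      integOn_mul (g := fun s => (x - s) * psiR a₁ (fun u => ‖B u‖) j s)
        ((continuous_const.sub continuous_id).continuousOn.mul hcR) hβ
    calc ‖psiC a₁ B (j + 1) x‖
        = ‖∫ s in a₁..x, ((x - s : ℝ) : ℂ) * psiC a₁ B j s * B s‖ := rfl
      _ ≤ ∫ s in a₁..x, ‖((x - s : ℝ) : ℂ) * psiC a₁ B j s * B s‖ :=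
          intervalIntegral.norm_integral_le_integral_norm hx.1
      _ ≤ ∫ s in a₁..x, (x - s) * psiR a₁ (fun u => ‖B u‖) j s *
            ‖B s‖ := by
          refine intervalIntegral.integral_mono_on hx.1
            ((ii_of_integOn hIC ha₁ hx).norm) (ii_of_integOn hIR ha₁ hx) fun s hs => ?_
          have hs2 : s ∈ Icc a₁ a₂ := ⟨hs.1, hs.2.trans hx.2⟩
          have h1 : ‖((x - s : ℝ) : ℂ) * psiC a₁ B j s * B s‖
              = (x - s) * ‖psiC a₁ B j s‖ * ‖B s‖ := by
            rw [norm_mul, norm_mul, Complex.norm_real, Real.norm_eq_abs,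
              abs_of_nonneg (sub_nonneg.2 hs.2)]
          rw [h1]
          exact mul_le_mul_of_nonneg_right
            (mul_le_mul_of_nonneg_left (ih s hs2) (sub_nonneg.2 hs.2)) (norm_nonneg _)
      _ = psiR a₁ (fun u => ‖B u‖) (j + 1) x := rfl


lemma fubini_tri {f g : ℝ → ℝ} (hf : IntegrableOn f (Icc a₁ a₂))
    (hg : IntegrableOn g (Icc a₁ a₂)) {x : ℝ} (hx : x ∈ Icc a₁ a₂) :
    (∫ s in a₁..x, f s * ∫ t in a₁..s, g t) = ∫ t in a₁..x, (∫ s in t..x, f s) * g t := by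
  have hsub : Ioc a₁ x ⊆ Icc a₁ a₂ := fun u hu => ⟨hu.1.le, hu.2.trans hx.2⟩
  set μ : Measure ℝ := volume.restrict (Ioc a₁ x) with hμ
  have hf' : Integrable f μ := hf.mono_set hsub
  have hg' : Integrable g μ := hg.mono_set hsub
  set S : Set (ℝ × ℝ) := {p : ℝ × ℝ | p.2 < p.1} with hS
  have hSm : MeasurableSet S := measurableSet_lt measurable_snd measurable_fst
  set F : ℝ → ℝ → ℝ := fun s t => S.indicator (fun p => f p.1 * g p.2) (s, t) with hF
  have hFint : Integrable (Function.uncurry F) (μ.prod μ) := by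
    have : Function.uncurry F = S.indicator (fun p => f p.1 * g p.2) := by
      funext p; rfl
    rw [this]
    exact (hf'.mul_prod hg').indicator hSm
  have swap := MeasureTheory.integral_integral_swap hFint
  -- left side
  have hL : (∫ s, (∫ t, F s t ∂μ) ∂μ) = ∫ s in a₁..x, f s * ∫ t in a₁..s, g t := by
    rw [intervalIntegral.integral_of_le hx.1]
    refine setIntegral_congr_fun measurableSet_Ioc fun s hs => ?_
    have h1 : ∀ t : ℝ, F s t = (Iio s).indicator (fun t => f s * g t) t := by
      intro t
      simp only [hF, hS, Set.indicator_apply, mem_setOf_eq, mem_Iio]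
    have h2 : Ioc a₁ x ∩ Iio s = Ioo a₁ s := by
      ext t
      simp only [mem_inter_iff, mem_Ioc, mem_Iio, mem_Ioo]
      exact ⟨fun h => ⟨h.1.1, h.2⟩, fun h => ⟨⟨h.1, h.2.le.trans hs.2⟩, h.2⟩⟩
    simp only [h1]
    rw [hμ, setIntegral_indicator measurableSet_Iio, h2, MeasureTheory.integral_const_mul,
      intervalIntegral.integral_of_le hs.1.le, integral_Ioc_eq_integral_Ioo]
  -- right side
  have hR : (∫ t, (∫ s, F s t ∂μ) ∂μ) = ∫ t in a₁..x, (∫ s in t..x, f s) * g t := by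
    rw [intervalIntegral.integral_of_le hx.1]
    refine setIntegral_congr_fun measurableSet_Ioc fun t ht => ?_
    have h1 : ∀ s : ℝ, F s t = (Ioi t).indicator (fun s => f s * g t) s := by
      intro s
      simp only [hF, hS, Set.indicator_apply, mem_setOf_eq, mem_Ioi]
    have h2 : Ioc a₁ x ∩ Ioi t = Ioc t x := by
      rw [Ioc_inter_Ioi, sup_eq_right.mpr ht.1.le]
    simp only [h1]
    rw [hμ, setIntegral_indicator measurableSet_Ioi, h2, MeasureTheory.integral_mul_const,
      intervalIntegral.integral_of_le ht.2]
  rw [← hL, ← hR, swap]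


lemma primitive_contOn (h12 : a₁ ≤ a₂) {β : ℝ → ℝ} (hβ : IntegrableOn β (Icc a₁ a₂)) :
    ContinuousOn (fun u => ∫ t in a₁..u, β t) (Icc a₁ a₂) := by
  have := continuousOn_primitive_interval (a := a₁) (b := a₂) (μ := volume)
    (f := β) (by rwa [uIcc_of_le h12])
  rwa [uIcc_of_le h12] at this

lemma pow_primitive_eq (h12 : a₁ ≤ a₂) {β : ℝ → ℝ} (hβ : IntegrableOn β (Icc a₁ a₂)) :
    ∀ j : ℕ, ∀ x ∈ Icc a₁ a₂,
      (∫ s in a₁..x, (∫ t in a₁..s, β t) ^ j * β s)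
        = (∫ t in a₁..x, β t) ^ (j + 1) / (j + 1 : ℝ) := by
  set m : ℝ → ℝ := fun u => ∫ t in a₁..u, β t with hm
  have hmc : ContinuousOn m (Icc a₁ a₂) := primitive_contOn h12 hβ
  have ha₁ : a₁ ∈ Icc a₁ a₂ := left_mem_Icc.2 h12
  intro j
  induction j with
  | zero => intro x hx; simp
  | succ j ih =>
    intro x hx
    have hgI : IntegrableOn (fun t => m t ^ j * β t) (Icc a₁ a₂) :=
      integOn_mul (hmc.pow j) hβ
    have hgI' : IntegrableOn (fun t => m t ^ (j + 1) * β t) (Icc a₁ a₂) :=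
      integOn_mul (hmc.pow (j + 1)) hβ
    have hmix : IntegrableOn (fun t => m x * (m t ^ j * β t)) (Icc a₁ a₂) := by
      have := integOn_mul (g := fun t => m x * m t ^ j)
        (continuousOn_const.mul (hmc.pow j)) hβ
      simpa [mul_assoc] using this
    -- Fubini identity
    have fub := fubini_tri hβ hgI hx
    -- left side of fub equals (1/(j+1)) * ∫ m^{j+1} β
    have hLeft : (∫ s in a₁..x, β s * ∫ t in a₁..s, m t ^ j * β t)
        = (∫ s in a₁..x, m s ^ (j + 1) * β s) / (j + 1 : ℝ) := by
      rw [eq_div_iff (by positivity : (j + 1 : ℝ) ≠ 0), ← intervalIntegral.integral_mul_const]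
      refine intervalIntegral.integral_congr fun s hs => ?_
      have hs' : s ∈ Icc a₁ a₂ := by
        rw [uIcc_of_le hx.1] at hs; exact ⟨hs.1, hs.2.trans hx.2⟩
      rw [ih s hs']
      field_simp
      ring
    -- right side of fub
    have hRight : (∫ t in a₁..x, (∫ s in t..x, β s) * (m t ^ j * β t))
        = m x * (∫ t in a₁..x, m t ^ j * β t) - ∫ t in a₁..x, m t ^ (j + 1) * β t := by
      have key : ∀ t ∈ Icc a₁ x, (∫ s in t..x, β s) * (m t ^ j * β t)
          = m x * (m t ^ j * β t) - m t ^ (j + 1) * β t := by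
        intro t ht
        have ht' : t ∈ Icc a₁ a₂ := ⟨ht.1, ht.2.trans hx.2⟩
        have hadd : m t + (∫ s in t..x, β s) = m x :=
          intervalIntegral.integral_add_adjacent_intervals
            (ii_of_integOn hβ ha₁ ht') (ii_of_integOn hβ ht' hx)
        have : (∫ s in t..x, β s) = m x - m t := by linarith
        rw [this]; ring
      rw [← intervalIntegral.integral_const_mul, ← intervalIntegral.integral_sub
        (by simpa [mul_assoc] using
          ii_of_integOn hmix ha₁ hx) (ii_of_integOn hgI' ha₁ hx)]
      refine intervalIntegral.integral_congr fun t ht => ?_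
      rw [uIcc_of_le hx.1] at ht
      exact key t ht
    rw [hLeft, hRight, ih x hx] at fub
    have hpos : (0:ℝ) < (j : ℝ) + 1 := by positivity
    have hpos2 : (0:ℝ) < (j : ℝ) + 2 := by positivity
    have : (∫ s in a₁..x, m s ^ (j + 1) * β s) = m x ^ (j + 2) / (j + 2 : ℝ) := by
      have hmx : m x * (m x ^ (j + 1) / (j + 1 : ℝ)) = m x ^ (j + 2) / (j + 1 : ℝ) := by
        field_simp; ring
      rw [hmx] at fub
      field_simp at fub ⊢
      linarith
    convert this using 2 <;> push_cast <;> ring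


lemma amgm_step (n : ℕ) {u v : ℝ} (hu : 0 ≤ u) (hv : 0 ≤ v) :
    ((n : ℝ) + 2) ^ (n + 2) * (u * v ^ (n + 1)) ≤
      ((n : ℝ) + 1) ^ (n + 1) * (u + v) ^ (n + 2) := by
  set N : ℝ := (n : ℝ) with hN
  have hN0 : (0:ℝ) ≤ N := Nat.cast_nonneg n
  have h1pos : (0:ℝ) < N + 1 := by linarith
  have h2pos : (0:ℝ) < N + 2 := by linarith
  set w₁ : ℝ := 1 / (N + 2) with hw₁d
  set w₂ : ℝ := (N + 1) / (N + 2) with hw₂d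
  set p₁ : ℝ := (N + 2) * u with hp₁d
  set p₂ : ℝ := (N + 2) * v / (N + 1) with hp₂d
  have hw₁ : 0 ≤ w₁ := by rw [hw₁d]; positivity
  have hw₂ : 0 ≤ w₂ := by rw [hw₂d]; positivity
  have hp₁ : 0 ≤ p₁ := mul_nonneg h2pos.le hu
  have hp₂ : 0 ≤ p₂ := div_nonneg (mul_nonneg h2pos.le hv) h1pos.le
  have hw : w₁ + w₂ = 1 := by rw [hw₁d, hw₂d]; field_simp; ring
  have key := Real.geom_mean_le_arith_mean2_weighted hw₁ hw₂ hp₁ hp₂ hw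
  have hsum : w₁ * p₁ + w₂ * p₂ = u + v := by
    rw [hw₁d, hw₂d, hp₁d, hp₂d]; field_simp
  rw [hsum] at key
  have key2 : (p₁ ^ w₁ * p₂ ^ w₂) ^ (n + 2 : ℕ) ≤ (u + v) ^ (n + 2 : ℕ) :=
    pow_le_pow_left₀ (by positivity) key _
  have hlhs : (p₁ ^ w₁ * p₂ ^ w₂) ^ (n + 2 : ℕ) = p₁ * p₂ ^ (n + 1 : ℕ) := by
    rw [← Real.rpow_natCast (p₁ ^ w₁ * p₂ ^ w₂) (n + 2),
      Real.mul_rpow (Real.rpow_nonneg hp₁ _) (Real.rpow_nonneg hp₂ _),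
      ← Real.rpow_mul hp₁, ← Real.rpow_mul hp₂]
    have e1 : w₁ * ((n + 2 : ℕ) : ℝ) = 1 := by
      rw [hw₁d]; push_cast; field_simp; rw [hN]
    have e2 : w₂ * ((n + 2 : ℕ) : ℝ) = ((n + 1 : ℕ) : ℝ) := by
      rw [hw₂d]; push_cast; field_simp; rw [hN]; ring
    rw [e1, e2, Real.rpow_one, Real.rpow_natCast]
  rw [hlhs] at key2
  have hexp : p₁ * p₂ ^ (n + 1 : ℕ) =
      (N + 2) ^ (n + 2) * (u * v ^ (n + 1)) / (N + 1) ^ (n + 1) := by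
    rw [hp₁d, hp₂d, div_pow, mul_pow]
    field_simp
    ring
  rw [hexp, div_le_iff₀ (by positivity)] at key2
  calc ((n : ℝ) + 2) ^ (n + 2) * (u * v ^ (n + 1))
      ≤ (u + v) ^ (n + 2) * (N + 1) ^ (n + 1) := key2
    _ = ((n : ℝ) + 1) ^ (n + 1) * (u + v) ^ (n + 2) := by rw [hN]; ring

lemma fact_ineq (j : ℕ) :
    ((2 * j).factorial : ℝ) ≤ 2 ^ j * (j.factorial : ℝ) * ((j : ℝ) + 1) ^ (j + 1) := by
  induction j with
  | zero => simp
  | succ j ih =>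
    have hrec : (0:ℝ) < 1 / ((j : ℝ) + 1) := by positivity
    have ha : (-2:ℝ) ≤ 1 / ((j : ℝ) + 1) := by linarith
    have hb := one_add_mul_le_pow ha (j + 1)
    have h1pos : (0:ℝ) < (j : ℝ) + 1 := by positivity
    have key : 2 * ((j : ℝ) + 1) ^ (j + 1) ≤ ((j : ℝ) + 2) ^ (j + 1) := by
      have h2 : ((1 : ℝ) + 1 / ((j:ℝ)+1)) ^ (j+1) * ((j:ℝ)+1)^(j+1) = ((j:ℝ)+2)^(j+1) := by
        rw [← mul_pow]; congr 1; field_simp; ring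
      have h3 : (1 : ℝ) + ((j + 1 : ℕ) : ℝ) * (1/((j:ℝ)+1)) = 2 := by
        push_cast; field_simp; norm_num
      calc 2 * ((j : ℝ) + 1) ^ (j + 1)
          = ((1:ℝ) + ((j + 1 : ℕ) : ℝ) * (1/((j:ℝ)+1))) * ((j:ℝ)+1)^(j+1) := by rw [h3]
        _ ≤ ((1 : ℝ) + 1 / ((j:ℝ)+1)) ^ (j+1) * ((j:ℝ)+1)^(j+1) :=
            mul_le_mul_of_nonneg_right hb (by positivity)
        _ = ((j:ℝ)+2)^(j+1) := h2
    have hfact : ((2 * (j + 1)).factorial : ℝ)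
        = (2*(j:ℝ)+2) * ((2*(j:ℝ)+1) * ((2 * j).factorial : ℝ)) := by
      have h : 2 * (j + 1) = (2*j+1) + 1 := by ring
      rw [h, Nat.factorial_succ, Nat.factorial_succ]
      push_cast; ring
    rw [hfact]
    have hfac' : (((j+1).factorial : ℕ) : ℝ) = ((j:ℝ)+1) * (j.factorial : ℝ) := by
      rw [Nat.factorial_succ]; push_cast; ring
    have hQ : (((j + 1 : ℕ) : ℝ) + 1)^((j+1)+1) = ((j:ℝ)+2)^(j+1) * ((j:ℝ)+2) := by
      rw [show (((j + 1 : ℕ) : ℝ) + 1) = (j:ℝ)+2 by push_cast; ring, pow_succ]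
    rw [hfac', hQ, pow_succ]
    have h1 : (0:ℝ) < 2^j := by positivity
    have h2 : (0:ℝ) < (j.factorial:ℝ) := by exact_mod_cast j.factorial_pos
    have h3 : (0:ℝ) ≤ ((j:ℝ)+1)^(j+1) := by positivity
    have h4 : (0:ℝ) ≤ (2:ℝ)^j * (j.factorial:ℝ) * (((j:ℝ)+1)*((j:ℝ)+2)) := by positivity
    have hmain := mul_le_mul_of_nonneg_left key h4
    have hcast : (0:ℝ) ≤ ((2*j).factorial : ℝ) := Nat.cast_nonneg _
    have hx : (0:ℝ) ≤ (j:ℝ) := Nat.cast_nonneg j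
    nlinarith [mul_le_mul_of_nonneg_left ih (by positivity : (0:ℝ) ≤ (2*(j:ℝ)+2) * (2*(j:ℝ)+1)),
      mul_nonneg (mul_nonneg h1.le h2.le) h3,
      mul_nonneg (mul_nonneg (mul_nonneg h1.le h2.le) h3) hx]


lemma psiR_le_bound (h12 : a₁ ≤ a₂) {β : ℝ → ℝ} (hβ : IntegrableOn β (Icc a₁ a₂))
    (hβ0 : ∀ s, 0 ≤ β s) :
    ∀ j : ℕ, ∀ x ∈ Icc a₁ a₂, psiR a₁ β j x ≤
      (x - a₁) ^ (j + 1) * (∫ t in a₁..x, β t) ^ j /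
        (((j : ℝ) + 1) ^ (j + 1) * (j.factorial : ℝ)) := by
  set m : ℝ → ℝ := fun u => ∫ t in a₁..u, β t with hm
  have hmc : ContinuousOn m (Icc a₁ a₂) := primitive_contOn h12 hβ
  have ha₁ : a₁ ∈ Icc a₁ a₂ := left_mem_Icc.2 h12
  have hmnn : ∀ x ∈ Icc a₁ a₂, 0 ≤ m x := fun x hx =>
    intervalIntegral.integral_nonneg hx.1 fun u _ => hβ0 u
  intro j
  induction j with
  | zero =>
    intro x hx
    simp [psiR]
  | succ j ih =>
    intro x hx
    set D : ℝ := ((j : ℝ) + 1) ^ (j + 1) * (j.factorial : ℝ) with hD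
    have hDpos : (0:ℝ) < D := by
      rw [hD]
      have : (0:ℝ) < (j.factorial : ℝ) := by exact_mod_cast j.factorial_pos
      positivity
    set C : ℝ := ((j : ℝ) + 1) ^ (j + 1) * (x - a₁) ^ (j + 2) /
      ((((j : ℝ) + 2) ^ (j + 2)) * D) with hC
    have h2pos : (0:ℝ) < ((j : ℝ) + 2) ^ (j + 2) := by positivity
    -- continuity pieces
    have hpsic := psiR_contOn h12 hβ j
    have hg1 : ContinuousOn (fun s => (x - s) * psiR a₁ β j s) (Icc a₁ a₂) :=
      (continuous_const.sub continuous_id).continuousOn.mul hpsic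
    have hg2 : ContinuousOn (fun s => (x - s) * ((s - a₁) ^ (j + 1) * m s ^ j / D))
        (Icc a₁ a₂) := by
      refine ((continuous_const.sub continuous_id).continuousOn.mul ?_)
      exact (((continuous_id.sub continuous_const).continuousOn.pow _).mul (hmc.pow j)).div_const D
    have hg3 : ContinuousOn (fun s => C * m s ^ j) (Icc a₁ a₂) :=
      continuousOn_const.mul (hmc.pow j)
    have hI1 : IntervalIntegrable (fun s => (x - s) * psiR a₁ β j s * β s) volume a₁ x :=
      ii_of_integOn (integOn_mul hg1 hβ) ha₁ hx
    have hI2 : IntervalIntegrable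
        (fun s => (x - s) * ((s - a₁) ^ (j + 1) * m s ^ j / D) * β s) volume a₁ x :=
      ii_of_integOn (integOn_mul hg2 hβ) ha₁ hx
    have hI3 : IntervalIntegrable (fun s => C * (m s ^ j * β s)) volume a₁ x := by
      have := ii_of_integOn (integOn_mul hg3 hβ) ha₁ hx
      simpa [mul_assoc] using this
    calc psiR a₁ β (j + 1) x
        = ∫ s in a₁..x, (x - s) * psiR a₁ β j s * β s := rfl
      _ ≤ ∫ s in a₁..x, (x - s) * ((s - a₁) ^ (j + 1) * m s ^ j / D) * β s := by
          refine intervalIntegral.integral_mono_on hx.1 hI1 hI2 fun s hs => ?_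
          have hs2 : s ∈ Icc a₁ a₂ := ⟨hs.1, hs.2.trans hx.2⟩
          have h1 := ih s hs2
          have h2 : (0:ℝ) ≤ x - s := sub_nonneg.2 hs.2
          have h3 := hβ0 s
          have : psiR a₁ β j s ≤ (s - a₁) ^ (j + 1) * m s ^ j / D := h1
          exact mul_le_mul_of_nonneg_right (mul_le_mul_of_nonneg_left this h2) h3
      _ ≤ ∫ s in a₁..x, C * (m s ^ j * β s) := by
          refine intervalIntegral.integral_mono_on hx.1 hI2 hI3 fun s hs => ?_
          have hs2 : s ∈ Icc a₁ a₂ := ⟨hs.1, hs.2.trans hx.2⟩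
          have hu : (0:ℝ) ≤ x - s := sub_nonneg.2 hs.2
          have hv : (0:ℝ) ≤ s - a₁ := sub_nonneg.2 hs.1
          have am := amgm_step j hu hv
          rw [show (x - s) + (s - a₁) = x - a₁ by ring] at am
          have hmsβ : (0:ℝ) ≤ m s ^ j * β s :=
            mul_nonneg (pow_nonneg (hmnn s hs2) j) (hβ0 s)
          have lhs_eq : (x - s) * ((s - a₁) ^ (j + 1) * m s ^ j / D) * β s
              = ((x - s) * (s - a₁) ^ (j + 1)) * (m s ^ j * β s) / D := by ring
          have rhs_eq : C * (m s ^ j * β s)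
              = (((j : ℝ) + 1) ^ (j + 1) * (x - a₁) ^ (j + 2)) * (m s ^ j * β s) /
                ((((j : ℝ) + 2) ^ (j + 2)) * D) := by rw [hC]; ring
          rw [lhs_eq, rhs_eq, div_le_div_iff₀ hDpos (by positivity)]
          nlinarith [mul_le_mul_of_nonneg_right (mul_le_mul_of_nonneg_right am hmsβ) hDpos.le]
      _ = C * ∫ s in a₁..x, m s ^ j * β s := intervalIntegral.integral_const_mul C _
      _ = C * (m x ^ (j + 1) / ((j : ℝ) + 1)) := by
          rw [hm]
          rw [pow_primitive_eq h12 hβ j x hx]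
      _ = (x - a₁) ^ (j + 1 + 1) * (∫ t in a₁..x, β t) ^ (j + 1) /
            ((((j + 1 : ℕ) : ℝ) + 1) ^ (j + 1 + 1) * (((j + 1).factorial : ℕ) : ℝ)) := by
          have hfs : (((j + 1).factorial : ℕ) : ℝ) = ((j:ℝ) + 1) * (j.factorial : ℝ) := by
            rw [Nat.factorial_succ]; push_cast; ring
          have hcast : ((j + 1 : ℕ) : ℝ) + 1 = (j:ℝ) + 2 := by push_cast; ring
          have ne1 : ((j:ℝ) + 1) ≠ 0 := by positivity
          have ne2 : ((j.factorial : ℕ) : ℝ) ≠ 0 := by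
            have : (0:ℝ) < (j.factorial : ℝ) := by exact_mod_cast j.factorial_pos
            exact this.ne'
          have ne3 : ((j:ℝ) + 2) ≠ 0 := by positivity
          rw [hfs, hcast, hC, hD, hm]
          field_simp

/-- Bounds on the iterated kernels:
`|ψⱼ(x;B)| ≤ ψⱼ(a₂;|B|) ≤ 2ʲ (a₂-a₁)^{j+1} ‖B‖₁ʲ / (2j)!` for `j ≥ 1`, `x ∈ [a₁,a₂]`. -/
theorem stmt6 (a₁ a₂ : ℝ) (h12 : a₁ < a₂) (B : ℝ → ℂ)
    (hB : MeasureTheory.IntegrableOn B (Set.Icc a₁ a₂))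
    (j : ℕ) (hj : 1 ≤ j) (x : ℝ) (hx : x ∈ Set.Icc a₁ a₂) :
    ‖psiC a₁ B j x‖ ≤ psiR a₁ (fun s => ‖B s‖) j a₂ ∧
    psiR a₁ (fun s => ‖B s‖) j a₂ ≤
      2 ^ j * (a₂ - a₁) ^ (j + 1) * (∫ s in a₁..a₂, ‖B s‖) ^ j /
        (Nat.factorial (2 * j)) := by
  have h12le : a₁ ≤ a₂ := h12.le
  have hβ : IntegrableOn (fun s => ‖B s‖) (Icc a₁ a₂) := by
    exact hB.norm
  have hβ0 : ∀ s, 0 ≤ ‖B s‖ := fun s => norm_nonneg _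
  have ha₂ : a₂ ∈ Icc a₁ a₂ := right_mem_Icc.2 h12le
  constructor
  · exact (psiC_abs_le h12le hB j x hx).trans
      (psiR_mono h12le hβ hβ0 j x hx a₂ ha₂ hx.2)
  · refine (psiR_le_bound h12le hβ hβ0 j a₂ ha₂).trans ?_
    set M : ℝ := ∫ s in a₁..a₂, ‖B s‖ with hM
    have hMnn : 0 ≤ M := intervalIntegral.integral_nonneg h12le fun u _ => hβ0 u
    have hL : (0:ℝ) ≤ a₂ - a₁ := sub_nonneg.2 h12le
    have hP : (0:ℝ) ≤ (a₂ - a₁) ^ (j + 1) * M ^ j := by positivity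
    have hfp : (0:ℝ) < (j.factorial : ℝ) := by exact_mod_cast j.factorial_pos
    have hfp2 : (0:ℝ) < (((2 * j).factorial : ℕ) : ℝ) := by exact_mod_cast (2*j).factorial_pos
    rw [div_le_div_iff₀ (by positivity) hfp2]
    have hf := fact_ineq j
    nlinarith [mul_le_mul_of_nonneg_left hf hP]
end

section
/- Under the hypotheses of the previous statement and assuming additionally that ω is a quasi-eigenvalue (so θ satisfies also θ'(a₂) = iω ν₂ θ(a₂) with ν₂ ∈ (0,∞]), there exists a unique closed subinterval [x₊, x⁺] ⊂ [a₁,a₂] such that Im(θ̄(x)θ'(x)) < 0 for x < x₊, Im(θ̄(x)θ'(x)) = 0 for x ∈ [x₊, x⁺], and Im(θ̄(x)θ'(x)) > 0 for x > x⁺. -/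
open MeasureTheory Set


lemma diag_null_aux (x y : ℝ) :
    ((volume.restrict (Ioc x y)).prod (volume.restrict (Ioc x y)))
      {p : ℝ × ℝ | p.1 = p.2} = 0 := by
  have hm : MeasurableSet {p : ℝ × ℝ | p.1 = p.2} :=
    measurableSet_eq_fun measurable_fst measurable_snd
  rw [Measure.prod_apply hm]
  have hz : ∀ s : ℝ, (volume.restrict (Ioc x y)) (Prod.mk s ⁻¹' {p : ℝ × ℝ | p.1 = p.2}) = 0 := by
    intro s
    have hpre : (Prod.mk s ⁻¹' {p : ℝ × ℝ | p.1 = p.2}) = {s} := by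
      ext t; simp [eq_comm]
    rw [hpre]
    refine le_antisymm ?_ zero_le
    calc (volume.restrict (Ioc x y)) {s} ≤ volume {s} := Measure.restrict_apply_le _ _
      _ = 0 := Real.volume_singleton
  simp [hz]

lemma parts_aux (x y : ℝ) (f h : ℝ → ℂ)
    (hf : IntegrableOn f (Ioc x y)) (hh : IntegrableOn h (Ioc x y)) :
    (∫ s in Ioc x y, f s * ∫ t in Ioc x y ∩ Iic s, h t)
      + (∫ t in Ioc x y, (∫ s in Ioc x y ∩ Iic t, f s) * h t)
    = (∫ s in Ioc x y, f s) * (∫ t in Ioc x y, h t) := by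
  set μ := volume.restrict (Ioc x y) with hμ
  set Φ₁ : ℝ × ℝ → ℂ := fun p => if p.2 ≤ p.1 then f p.1 * h p.2 else 0 with hΦ₁
  set Φ₂ : ℝ × ℝ → ℂ := fun p => if p.1 ≤ p.2 then f p.1 * h p.2 else 0 with hΦ₂
  have hbase : Integrable (fun p : ℝ × ℝ => f p.1 * h p.2) (μ.prod μ) := Integrable.mul_prod hf hh
  have hΦ₁int : Integrable Φ₁ (μ.prod μ) := by
    have : Φ₁ = {p : ℝ × ℝ | p.2 ≤ p.1}.indicator (fun p => f p.1 * h p.2) := by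
      funext p; by_cases hp : p.2 ≤ p.1 <;> simp [hΦ₁, hp, Set.indicator]
    rw [this]
    exact hbase.indicator (measurableSet_le measurable_snd measurable_fst)
  have hΦ₂int : Integrable Φ₂ (μ.prod μ) := by
    have : Φ₂ = {p : ℝ × ℝ | p.1 ≤ p.2}.indicator (fun p => f p.1 * h p.2) := by
      funext p; by_cases hp : p.1 ≤ p.2 <;> simp [hΦ₂, hp, Set.indicator]
    rw [this]
    exact hbase.indicator (measurableSet_le measurable_fst measurable_snd)
  -- first term
  have step1 : (∫ s in Ioc x y, f s * ∫ t in Ioc x y ∩ Iic s, h t)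
      = ∫ p, Φ₁ p ∂(μ.prod μ) := by
    have hpt : ∀ s : ℝ, f s * (∫ t in Ioc x y ∩ Iic s, h t) = ∫ t, Φ₁ (s, t) ∂μ := by
      intro s
      have h1 : (fun t => Φ₁ (s, t)) = (Iic s).indicator (fun t => f s * h t) := by
        funext t; by_cases ht : t ≤ s <;> simp [hΦ₁, ht, Set.indicator]
      rw [h1, integral_indicator measurableSet_Iic, hμ,
        Measure.restrict_restrict measurableSet_Iic, Set.inter_comm,
        integral_const_mul]
    calc (∫ s in Ioc x y, f s * ∫ t in Ioc x y ∩ Iic s, h t)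
        = ∫ s, ∫ t, Φ₁ (s, t) ∂μ ∂μ := by rw [hμ]; exact integral_congr_ae (.of_forall hpt)
      _ = ∫ p, Φ₁ p ∂(μ.prod μ) := integral_integral hΦ₁int
  -- second term
  have step2 : (∫ t in Ioc x y, (∫ s in Ioc x y ∩ Iic t, f s) * h t)
      = ∫ p, Φ₂ p ∂(μ.prod μ) := by
    have hpt : ∀ t : ℝ, (∫ s in Ioc x y ∩ Iic t, f s) * h t = ∫ s, Φ₂ (s, t) ∂μ := by
      intro t
      have h1 : (fun s => Φ₂ (s, t)) = (Iic t).indicator (fun s => f s * h t) := by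
        funext s; by_cases hs : s ≤ t <;> simp [hΦ₂, hs, Set.indicator]
      rw [h1, integral_indicator measurableSet_Iic, hμ,
        Measure.restrict_restrict measurableSet_Iic, Set.inter_comm,
        integral_mul_const]
    have hswapint : Integrable (Function.uncurry fun t s => Φ₂ (s, t)) (μ.prod μ) := by
      have : (Function.uncurry fun t s => Φ₂ (s, t)) = fun z : ℝ × ℝ => Φ₂ z.swap := rfl
      rw [this]
      have h2 : (fun z : ℝ × ℝ => Φ₂ z.swap)
          = {p : ℝ × ℝ | p.2 ≤ p.1}.indicator (fun p => f p.2 * h p.1) := by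
        funext p; by_cases hp : p.2 ≤ p.1 <;> simp [hΦ₂, Prod.swap, hp, Set.indicator]
      rw [h2]
      have : Integrable (fun p : ℝ × ℝ => f p.2 * h p.1) (μ.prod μ) := by
        have := Integrable.mul_prod hh hf
        simpa [mul_comm] using this
      exact this.indicator (measurableSet_le measurable_snd measurable_fst)
    calc (∫ t in Ioc x y, (∫ s in Ioc x y ∩ Iic t, f s) * h t)
        = ∫ t, ∫ s, Φ₂ (s, t) ∂μ ∂μ := by rw [hμ]; exact integral_congr_ae (.of_forall hpt)
      _ = ∫ z : ℝ × ℝ, Φ₂ z.swap ∂(μ.prod μ) := integral_integral hswapint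
      _ = ∫ p, Φ₂ p ∂(μ.prod μ) := integral_prod_swap Φ₂
  rw [step1, step2, ← integral_add hΦ₁int hΦ₂int]
  have hdiag : Integrable ({p : ℝ × ℝ | p.1 = p.2}.indicator
      (fun p => f p.1 * h p.2)) (μ.prod μ) :=
    hbase.indicator (measurableSet_eq_fun measurable_fst measurable_snd)
  have hsum : (fun p => Φ₁ p + Φ₂ p) = fun p : ℝ × ℝ =>
      f p.1 * h p.2 + {p : ℝ × ℝ | p.1 = p.2}.indicator (fun p => f p.1 * h p.2) p := by
    funext p
    rcases lt_trichotomy p.1 p.2 with hc | hc | hc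
    · simp [hΦ₁, hΦ₂, hc.le, not_le.mpr hc, Set.indicator, hc.ne]
    · simp [hΦ₁, hΦ₂, hc, Set.indicator]
    · simp [hΦ₁, hΦ₂, hc.le, not_le.mpr hc, Set.indicator, hc.ne']
  rw [hsum, integral_add hbase hdiag]
  have hdz : ∫ p, {p : ℝ × ℝ | p.1 = p.2}.indicator (fun p => f p.1 * h p.2) p
      ∂(μ.prod μ) = 0 := by
    rw [integral_indicator (measurableSet_eq_fun measurable_fst measurable_snd)]
    rw [Measure.restrict_eq_zero.mpr (diag_null_aux x y)]
    exact integral_zero_measure _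
  rw [hdz, add_zero, integral_prod_mul]


/-- key identity -/
lemma key_aux (a₁ a₂ : ℝ) (B : ℝ → ℝ) (ω : ℂ) (θ g : ℝ → ℂ)
    (hθC : ContinuousOn θ (Set.Icc a₁ a₂)) (hgC : ContinuousOn g (Set.Icc a₁ a₂))
    (hint : MeasureTheory.IntegrableOn (fun t => (B t : ℂ) * θ t) (Set.Icc a₁ a₂))
    (hθ : ∀ x ∈ Set.Icc a₁ a₂, θ x = θ a₁ + ∫ t in a₁..x, g t)
    (hg : ∀ x ∈ Set.Icc a₁ a₂, g x = g a₁ + ∫ t in a₁..x, -(ω ^ 2) * (B t : ℂ) * θ t)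
    {x y : ℝ} (hx : x ∈ Set.Icc a₁ a₂) (hy : y ∈ Set.Icc a₁ a₂) (hxy : x ≤ y) :
    (starRingEnd ℂ) (θ y) * g y - (starRingEnd ℂ) (θ x) * g x
      = ∫ t in x..y, ((starRingEnd ℂ) (g t) * g t
          + (starRingEnd ℂ) (θ t) * (-(ω ^ 2) * (B t : ℂ) * θ t)) := by
  set h : ℝ → ℂ := fun t => -(ω ^ 2) * (B t : ℂ) * θ t with hh_def
  set f : ℝ → ℂ := fun s => (starRingEnd ℂ) (g s) with hf_def
  have hIcc : Set.Icc x y ⊆ Set.Icc a₁ a₂ := Set.Icc_subset_Icc hx.1 hy.2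
  -- integrabilities
  have hgInt : ∀ z ∈ Set.Icc a₁ a₂, IntervalIntegrable g volume a₁ z := by
    intro z hz
    exact (hgC.mono (by rw [Set.uIcc_of_le hz.1]; exact Set.Icc_subset_Icc_right hz.2)).intervalIntegrable
  have hhIntOn : IntegrableOn h (Set.Icc a₁ a₂) := by
    have : IntegrableOn (fun t => -(ω ^ 2) * ((B t : ℂ) * θ t)) (Set.Icc a₁ a₂) :=
      hint.const_mul _
    refine this.congr_fun ?_ measurableSet_Icc
    intro t _; simp [hh_def]; ring
  have hhInt : ∀ z ∈ Set.Icc a₁ a₂, IntervalIntegrable h volume a₁ z := by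
    intro z hz
    refine (hhIntOn.mono_set ?_).intervalIntegrable
    rw [Set.uIcc_of_le hz.1]; exact Set.Icc_subset_Icc_right hz.2
  -- subinterval integral representations
  have hθsub : ∀ z ∈ Set.Icc x y, θ z = θ x + ∫ t in x..z, g t := by
    intro z hz
    have hz' := hIcc hz
    rw [hθ z hz', hθ x hx]
    have hs := intervalIntegral.integral_interval_sub_left (hgInt z hz') (hgInt x hx)
    rw [← hs]; ring
  have hgsub : ∀ z ∈ Set.Icc x y, g z = g x + ∫ t in x..z, h t := by
    intro z hz
    have hz' := hIcc hz
    rw [hg z hz', hg x hx]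
    have hs := intervalIntegral.integral_interval_sub_left (hhInt z hz') (hhInt x hx)
    rw [← hs]; ring
  have hfsub : ∀ z ∈ Set.Icc x y, (starRingEnd ℂ) (θ z)
      = (starRingEnd ℂ) (θ x) + ∫ t in x..z, f t := by
    intro z hz
    have h1 : ∫ t in x..z, f t = (starRingEnd ℂ) (∫ t in x..z, g t) := by
      simp only [hf_def, intervalIntegral, map_sub, integral_conj]
    rw [h1, ← map_add, ← hθsub z hz]
  -- continuities on Icc x y
  have hgCxy : ContinuousOn g (Set.Icc x y) := hgC.mono hIcc
  have hθCxy : ContinuousOn θ (Set.Icc x y) := hθC.mono hIcc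
  have hfCxy : ContinuousOn f (Set.Icc x y) := by
    exact Complex.continuous_conj.comp_continuousOn hgCxy
  have hhxy : IntervalIntegrable h volume x y := by
    refine (hhIntOn.mono_set ?_).intervalIntegrable
    rw [Set.uIcc_of_le hxy]; exact hIcc
  have hfxy : IntervalIntegrable f volume x y := by
    refine ContinuousOn.intervalIntegrable ?_
    rw [Set.uIcc_of_le hxy]; exact hfCxy
  -- primitives
  set Ph : ℝ → ℂ := fun z => ∫ t in x..z, h t with hPh
  set Pf : ℝ → ℂ := fun z => ∫ t in x..z, f t with hPf
  have hPhC : ContinuousOn Ph (Set.Icc x y) := by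
    have := intervalIntegral.continuousOn_primitive_interval (a := x) (b := y)
      (f := h) (μ := volume) ?_
    · rwa [Set.uIcc_of_le hxy] at this
    · rw [Set.uIcc_of_le hxy]; exact hhIntOn.mono_set hIcc
  have hPfC : ContinuousOn Pf (Set.Icc x y) := by
    have := intervalIntegral.continuousOn_primitive_interval (a := x) (b := y)
      (f := f) (μ := volume) ?_
    · rwa [Set.uIcc_of_le hxy] at this
    · rw [Set.uIcc_of_le hxy]; exact hfCxy.integrableOn_Icc (μ := volume)
  -- expand LHS
  have hLHS : (starRingEnd ℂ) (θ y) * g y - (starRingEnd ℂ) (θ x) * g x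
      = (starRingEnd ℂ) (θ x) * Ph y + Pf y * g x + Pf y * Ph y := by
    rw [hfsub y ⟨hxy, le_refl y⟩, hgsub y ⟨hxy, le_refl y⟩]; ring
  -- expand RHS integrand
  have hRHS1 : ∫ t in x..y, (f t * g t + (starRingEnd ℂ) (θ t) * h t)
      = ∫ t in x..y, (f t * g x + f t * Ph t + ((starRingEnd ℂ) (θ x) * h t + Pf t * h t)) := by
    apply intervalIntegral.integral_congr
    intro t ht
    rw [Set.uIcc_of_le hxy] at ht
    simp only [hgsub t ht, hfsub t ht]; ring
  -- integrability of the four pieces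
  have ip1 : IntervalIntegrable (fun t => f t * g x) volume x y := by
    refine ContinuousOn.intervalIntegrable ?_
    rw [Set.uIcc_of_le hxy]; exact hfCxy.mul continuousOn_const
  have ip2 : IntervalIntegrable (fun t => f t * Ph t) volume x y := by
    refine ContinuousOn.intervalIntegrable ?_
    rw [Set.uIcc_of_le hxy]; exact hfCxy.mul hPhC
  have ip3 : IntervalIntegrable (fun t => (starRingEnd ℂ) (θ x) * h t) volume x y :=
    hhxy.const_mul _
  have ip4 : IntervalIntegrable (fun t => Pf t * h t) volume x y := by
    have := hhxy.continuousOn_mul (g := Pf) (by rwa [Set.uIcc_of_le hxy])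
    exact this
  -- split
  have hsplit : ∫ t in x..y, (f t * g x + f t * Ph t + ((starRingEnd ℂ) (θ x) * h t + Pf t * h t))
      = (∫ t in x..y, f t * g x) + (∫ t in x..y, f t * Ph t)
        + ((∫ t in x..y, (starRingEnd ℂ) (θ x) * h t) + ∫ t in x..y, Pf t * h t) := by
    rw [intervalIntegral.integral_add (ip1.add ip2) (ip3.add ip4),
      intervalIntegral.integral_add ip1 ip2, intervalIntegral.integral_add ip3 ip4]
  have e1 : (∫ t in x..y, f t * g x) = Pf y * g x := intervalIntegral.integral_mul_const _ _
  have e3 : (∫ t in x..y, (starRingEnd ℂ) (θ x) * h t) = (starRingEnd ℂ) (θ x) * Ph y :=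
    intervalIntegral.integral_const_mul _ _
  -- Fubini for cross terms
  have hfIoc : IntegrableOn f (Ioc x y) := by
    exact (hfCxy.integrableOn_Icc (μ := volume)).mono_set Set.Ioc_subset_Icc_self
  have hhIoc : IntegrableOn h (Ioc x y) := (hhIntOn.mono_set hIcc).mono_set Set.Ioc_subset_Icc_self
  have e24 : (∫ t in x..y, f t * Ph t) + (∫ t in x..y, Pf t * h t) = Pf y * Ph y := by
    have c2 : (∫ t in x..y, f t * Ph t) = ∫ s in Ioc x y, f s * ∫ t in Ioc x y ∩ Iic s, h t := by
      rw [intervalIntegral.integral_of_le hxy]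
      refine setIntegral_congr_fun measurableSet_Ioc ?_
      intro s hs
      have : Ph s = ∫ t in Ioc x y ∩ Iic s, h t := by
        simp only [hPh]
        rw [intervalIntegral.integral_of_le hs.1.le, Set.Ioc_inter_Iic,
          min_eq_right hs.2]
      show f s * Ph s = f s * ∫ t in Ioc x y ∩ Iic s, h t
      rw [this]
    have c4 : (∫ t in x..y, Pf t * h t) = ∫ t in Ioc x y, (∫ s in Ioc x y ∩ Iic t, f s) * h t := by
      rw [intervalIntegral.integral_of_le hxy]
      refine setIntegral_congr_fun measurableSet_Ioc ?_
      intro t ht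
      have : Pf t = ∫ s in Ioc x y ∩ Iic t, f s := by
        simp only [hPf]
        rw [intervalIntegral.integral_of_le ht.1.le, Set.Ioc_inter_Iic,
          min_eq_right ht.2]
      show Pf t * h t = (∫ s in Ioc x y ∩ Iic t, f s) * h t
      rw [this]
    have cF : Pf y = ∫ s in Ioc x y, f s := intervalIntegral.integral_of_le hxy
    have cH : Ph y = ∫ t in Ioc x y, h t := intervalIntegral.integral_of_le hxy
    rw [c2, c4, cF, cH]
    exact parts_aux x y f h hfIoc hhIoc
  rw [hRHS1, hsplit, e1, e3, hLHS]
  linear_combination - e24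

lemma mono_aux (a₁ a₂ : ℝ) (B : ℝ → ℝ)
    (hB0 : ∀ᵐ x ∂(MeasureTheory.volume.restrict (Set.Icc a₁ a₂)), 0 ≤ B x)
    (ω : ℂ) (hre : 0 < ω.re) (him : ω.im < 0) (θ g : ℝ → ℂ)
    (hθC : ContinuousOn θ (Set.Icc a₁ a₂)) (hgC : ContinuousOn g (Set.Icc a₁ a₂))
    (hint : MeasureTheory.IntegrableOn (fun t => (B t : ℂ) * θ t) (Set.Icc a₁ a₂))
    (hθ : ∀ x ∈ Set.Icc a₁ a₂, θ x = θ a₁ + ∫ t in a₁..x, g t)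
    (hg : ∀ x ∈ Set.Icc a₁ a₂, g x = g a₁ + ∫ t in a₁..x, -(ω ^ 2) * (B t : ℂ) * θ t) :
    MonotoneOn (fun x => ((starRingEnd ℂ) (θ x) * g x).im) (Set.Icc a₁ a₂) := by
  intro x hx y hy hxy
  set q : ℝ → ℂ := fun t => ((starRingEnd ℂ) (g t) * g t
      + (starRingEnd ℂ) (θ t) * (-(ω ^ 2) * (B t : ℂ) * θ t)) with hq_def
  have hIcc : Set.Icc x y ⊆ Set.Icc a₁ a₂ := Set.Icc_subset_Icc hx.1 hy.2
  have key := key_aux a₁ a₂ B ω θ g hθC hgC hint hθ hg hx hy hxy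
  -- integrability of q on Ioc x y
  have hhIntOn : IntegrableOn (fun t => -(ω ^ 2) * (B t : ℂ) * θ t) (Set.Icc a₁ a₂) := by
    have : IntegrableOn (fun t => -(ω ^ 2) * ((B t : ℂ) * θ t)) (Set.Icc a₁ a₂) :=
      hint.const_mul _
    refine this.congr_fun ?_ measurableSet_Icc
    intro t _; simp; ring
  have h1 : IntegrableOn (fun t => (starRingEnd ℂ) (g t) * g t) (Ioc x y) := by
    refine (((Complex.continuous_conj.comp_continuousOn (hgC.mono hIcc)).mul
      (hgC.mono hIcc)).integrableOn_Icc (μ := volume)).mono_set Set.Ioc_subset_Icc_self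
  have hθb : ∃ C, ∀ t ∈ Set.Icc x y, ‖(starRingEnd ℂ) (θ t)‖ ≤ C := by
    rcases isCompact_Icc.exists_bound_of_continuousOn
      (Complex.continuous_conj.comp_continuousOn (hθC.mono hIcc)) with ⟨C, hC⟩
    exact ⟨C, hC⟩
  have h2 : IntegrableOn (fun t => (starRingEnd ℂ) (θ t)
      * (-(ω ^ 2) * (B t : ℂ) * θ t)) (Ioc x y) := by
    rcases hθb with ⟨C, hC⟩
    refine Integrable.bdd_mul (f := fun t => (starRingEnd ℂ) (θ t)) (c := C)
      ((hhIntOn.mono_set hIcc).mono_set Set.Ioc_subset_Icc_self) ?_ ?_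
    · exact ((Complex.continuous_conj.comp_continuousOn
        ((hθC.mono hIcc).mono Set.Ioc_subset_Icc_self)).aestronglyMeasurable measurableSet_Ioc)
    · filter_upwards [ae_restrict_mem measurableSet_Ioc] with t ht
      exact hC t (Set.Ioc_subset_Icc_self ht)
  have hqInt : IntegrableOn q (Ioc x y) := h1.add h2
  -- rewrite the difference of the imaginary parts
  have him_eq : ((starRingEnd ℂ) (θ y) * g y).im - ((starRingEnd ℂ) (θ x) * g x).im
      = ∫ t in Ioc x y, (q t).im := by
    rw [← Complex.sub_im, key, intervalIntegral.integral_of_le hxy]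
    have h3 := integral_im (μ := volume.restrict (Ioc x y)) (𝕜 := ℂ) (f := q) hqInt
    simp only [RCLike.im_to_complex] at h3
    exact h3.symm
  have hnn : 0 ≤ ∫ t in Ioc x y, (q t).im := by
    refine integral_nonneg_of_ae ?_
    have hB' : ∀ᵐ t ∂(volume.restrict (Ioc x y)), 0 ≤ B t :=
      ae_restrict_of_ae_restrict_of_subset
        (fun t ht => hIcc (Set.Ioc_subset_Icc_self ht)) hB0
    filter_upwards [hB'] with t hBt
    have him2 : (ω ^ 2).im = 2 * ω.re * ω.im := by
      simp [pow_two, Complex.mul_im]; ring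
    simp only [Pi.zero_apply, hq_def, Complex.add_im, Complex.mul_im, Complex.mul_re,
      Complex.conj_re, Complex.conj_im, Complex.neg_re, Complex.neg_im,
      Complex.ofReal_re, Complex.ofReal_im, him2]
    nlinarith [sq_nonneg ((θ t).re), sq_nonneg ((θ t).im),
      mul_pos hre (neg_pos.mpr him), mul_nonneg hBt (sq_nonneg ((θ t).re)),
      mul_nonneg hBt (sq_nonneg ((θ t).im)),
      mul_nonneg (mul_nonneg hBt (sq_nonneg ((θ t).re))) (mul_pos hre (neg_pos.mpr him)).le,
      mul_nonneg (mul_nonneg hBt (sq_nonneg ((θ t).im))) (mul_pos hre (neg_pos.mpr him)).le]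
  linarith [him_eq ▸ hnn]

/-- Existence and uniqueness of the turning interval `[x₊, x⁺]` for a mode `θ`
associated with a quasi-eigenvalue `ω` with `Re ω > 0`, `Im ω < 0`. -/
theorem stmt9 (a₁ a₂ : ℝ) (h12 : a₁ < a₂) (B : ℝ → ℝ)
    (hBint : MeasureTheory.IntegrableOn B (Set.Icc a₁ a₂))
    (hB0 : ∀ᵐ x ∂(MeasureTheory.volume.restrict (Set.Icc a₁ a₂)), 0 ≤ B x)
    (ν₁ μ₂ : ℝ) (hν₁ : 0 ≤ ν₁) (hμ₂ : 0 ≤ μ₂)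
    (ω : ℂ) (hre : 0 < ω.re) (him : ω.im < 0)
    (θ g : ℝ → ℂ)
    (hθC : ContinuousOn θ (Set.Icc a₁ a₂)) (hgC : ContinuousOn g (Set.Icc a₁ a₂))
    (hint : MeasureTheory.IntegrableOn (fun t => (B t : ℂ) * θ t) (Set.Icc a₁ a₂))
    (hθ : ∀ x ∈ Set.Icc a₁ a₂, θ x = θ a₁ + ∫ t in a₁..x, g t)
    (hg : ∀ x ∈ Set.Icc a₁ a₂, g x = g a₁ + ∫ t in a₁..x, -(ω ^ 2) * (B t : ℂ) * θ t)
    (hic0 : θ a₁ = 1) (hic1 : g a₁ = -Complex.I * ω * (ν₁ : ℂ))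
    (hbc2 : (μ₂ : ℂ) * g a₂ = Complex.I * ω * θ a₂) :
    ∃! p : ℝ × ℝ, a₁ ≤ p.1 ∧ p.1 ≤ p.2 ∧ p.2 ≤ a₂ ∧
      (∀ x ∈ Set.Icc a₁ a₂, x < p.1 → ((starRingEnd ℂ) (θ x) * g x).im < 0) ∧
      (∀ x ∈ Set.Icc p.1 p.2, ((starRingEnd ℂ) (θ x) * g x).im = 0) ∧
      (∀ x ∈ Set.Icc a₁ a₂, p.2 < x → 0 < ((starRingEnd ℂ) (θ x) * g x).im) := by
    classical
  set F : ℝ → ℝ := fun x => ((starRingEnd ℂ) (θ x) * g x).im with hF_def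
  have hmono : MonotoneOn F (Set.Icc a₁ a₂) :=
    mono_aux a₁ a₂ B hB0 ω hre him θ g hθC hgC hint hθ hg
  have hFc : ContinuousOn F (Set.Icc a₁ a₂) := by
    exact Complex.continuous_im.comp_continuousOn
      ((Complex.continuous_conj.comp_continuousOn hθC).mul hgC)
  have ha1 : a₁ ∈ Set.Icc a₁ a₂ := ⟨le_refl _, h12.le⟩
  have ha2 : a₂ ∈ Set.Icc a₁ a₂ := ⟨h12.le, le_refl _⟩
  have hFa1 : F a₁ ≤ 0 := by
    simp only [hF_def, hic0, hic1, map_one, one_mul]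
    simp [Complex.mul_im, Complex.mul_re]
    nlinarith [mul_nonneg hre.le hν₁]
  have hFa2 : 0 ≤ F a₂ := by
    rcases eq_or_lt_of_le hμ₂ with hμz | hμp
    · -- μ₂ = 0 : then θ a₂ = 0
      have hθ2 : θ a₂ = 0 := by
        have hIω : Complex.I * ω ≠ 0 := by
          apply mul_ne_zero Complex.I_ne_zero
          intro hz; rw [hz] at hre; simp at hre
        have : Complex.I * ω * θ a₂ = 0 := by rw [← hbc2, ← hμz]; simp
        exact (mul_eq_zero.mp this).resolve_left hIω
      simp [hF_def, hθ2]
    · -- μ₂ > 0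
      have hμne : (μ₂ : ℂ) ≠ 0 := by exact_mod_cast hμp.ne'
      have hga2 : g a₂ = Complex.I * ω * θ a₂ / (μ₂ : ℂ) := by
        rw [eq_div_iff hμne]; linear_combination hbc2
      have hns : (starRingEnd ℂ) (θ a₂) * θ a₂ = ((Complex.normSq (θ a₂) : ℝ) : ℂ) := by
        rw [Complex.normSq_eq_conj_mul_self]
      have hcalc : (starRingEnd ℂ) (θ a₂) * g a₂
          = Complex.I * ω * ((Complex.normSq (θ a₂) : ℝ) : ℂ) / (μ₂ : ℂ) := by
        rw [hga2, ← hns]; ring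
      have : F a₂ = ω.re * Complex.normSq (θ a₂) / μ₂ := by
        rw [hF_def]
        simp only [hcalc]
        rw [show Complex.I * ω * ((Complex.normSq (θ a₂) : ℝ) : ℂ) / (μ₂ : ℂ)
          = Complex.I * ω * (((Complex.normSq (θ a₂) / μ₂ : ℝ)) : ℂ) by
            push_cast; ring]
        simp [Complex.mul_im, Complex.mul_re]
        ring
      rw [this]
      exact div_nonneg (mul_nonneg hre.le (Complex.normSq_nonneg _)) hμ₂
  -- the sets
  set A : Set ℝ := {z | z ∈ Set.Icc a₁ a₂ ∧ 0 ≤ F z} with hA_def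
  set Bs : Set ℝ := {z | z ∈ Set.Icc a₁ a₂ ∧ F z ≤ 0} with hBs_def
  have hAne : a₂ ∈ A := ⟨ha2, hFa2⟩
  have hBne : a₁ ∈ Bs := ⟨ha1, hFa1⟩
  have hAbdd : BddBelow A := ⟨a₁, fun z hz => hz.1.1⟩
  have hBbdd : BddAbove Bs := ⟨a₂, fun z hz => hz.1.2⟩
  have hAclosed : IsClosed A := by
    have : A = Set.Icc a₁ a₂ ∩ F ⁻¹' (Set.Ici 0) := by
      ext z; simp [hA_def, Set.mem_Ici, and_comm]
    rw [this]
    exact hFc.preimage_isClosed_of_isClosed isClosed_Icc isClosed_Ici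
  have hBclosed : IsClosed Bs := by
    have : Bs = Set.Icc a₁ a₂ ∩ F ⁻¹' (Set.Iic 0) := by
      ext z; simp [hBs_def, Set.mem_Iic, and_comm]
    rw [this]
    exact hFc.preimage_isClosed_of_isClosed isClosed_Icc isClosed_Iic
  set xp : ℝ := sInf A with hxp_def
  set xq : ℝ := sSup Bs with hxq_def
  have hxpA : xp ∈ A := hAclosed.csInf_mem ⟨a₂, hAne⟩ hAbdd
  have hxqB : xq ∈ Bs := hBclosed.csSup_mem ⟨a₁, hBne⟩ hBbdd
  have hxpI : xp ∈ Set.Icc a₁ a₂ := hxpA.1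
  have hxqI : xq ∈ Set.Icc a₁ a₂ := hxqB.1
  have hFxp0 : 0 ≤ F xp := hxpA.2
  have hFxq0 : F xq ≤ 0 := hxqB.2
  -- strict negativity to the left of xp
  have hneg : ∀ z ∈ Set.Icc a₁ a₂, z < xp → F z < 0 := by
    intro z hz hlt
    by_contra hcon
    push_neg at hcon
    exact absurd (csInf_le hAbdd ⟨hz, hcon⟩) (not_le.mpr hlt)
  have hpos : ∀ z ∈ Set.Icc a₁ a₂, xq < z → 0 < F z := by
    intro z hz hlt
    by_contra hcon
    push_neg at hcon
    exact absurd (le_csSup hBbdd ⟨hz, hcon⟩) (not_le.mpr hlt)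
  -- F xp ≤ 0
  have hFxp0' : F xp ≤ 0 := by
    rcases eq_or_lt_of_le hxpI.1 with heq | hlt
    · rw [← heq]; exact hFa1
    · have hsub : Set.Ico a₁ xp ⊆ Set.Icc a₁ a₂ :=
        fun z hz => ⟨hz.1, (hz.2.le.trans hxpI.2)⟩
      have hcl : xp ∈ closure (Set.Ico a₁ xp) := by
        rw [closure_Ico hlt.ne]; exact ⟨hlt.le, le_refl _⟩
      haveI : (nhdsWithin xp (Set.Ico a₁ xp)).NeBot :=
        mem_closure_iff_nhdsWithin_neBot.mp hcl
      have htend : Filter.Tendsto F (nhdsWithin xp (Set.Ico a₁ xp)) (nhds (F xp)) :=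
        ((hFc xp hxpI).mono hsub).tendsto
      refine le_of_tendsto htend ?_
      filter_upwards [self_mem_nhdsWithin] with z hz
      exact (hneg z (hsub hz) hz.2).le
  have hFxp : F xp = 0 := le_antisymm hFxp0' hFxp0
  -- 0 ≤ F xq
  have hFxq0' : 0 ≤ F xq := by
    rcases eq_or_lt_of_le hxqI.2 with heq | hlt
    · rw [heq]; exact hFa2
    · have hsub : Set.Ioc xq a₂ ⊆ Set.Icc a₁ a₂ :=
        fun z hz => ⟨hxqI.1.trans hz.1.le, hz.2⟩
      have hcl : xq ∈ closure (Set.Ioc xq a₂) := by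
        rw [closure_Ioc hlt.ne]; exact ⟨le_refl _, hlt.le⟩
      haveI : (nhdsWithin xq (Set.Ioc xq a₂)).NeBot :=
        mem_closure_iff_nhdsWithin_neBot.mp hcl
      have htend : Filter.Tendsto F (nhdsWithin xq (Set.Ioc xq a₂)) (nhds (F xq)) :=
        ((hFc xq hxqI).mono hsub).tendsto
      refine ge_of_tendsto htend ?_
      filter_upwards [self_mem_nhdsWithin] with z hz
      exact (hpos z (hsub hz) hz.1).le
  have hFxq : F xq = 0 := le_antisymm hFxq0 hFxq0'
  have hle : xp ≤ xq := le_csSup hBbdd ⟨hxpI, hFxp.le⟩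
  have hzero : ∀ z ∈ Set.Icc xp xq, F z = 0 := by
    intro z hz
    have hzI : z ∈ Set.Icc a₁ a₂ := ⟨hxpI.1.trans hz.1, hz.2.trans hxqI.2⟩
    have h1 := hmono hxpI hzI hz.1
    have h2 := hmono hzI hxqI hz.2
    rw [hFxp] at h1; rw [hFxq] at h2
    linarith
  refine ⟨(xp, xq), ⟨hxpI.1, hle, hxqI.2, hneg, hzero, hpos⟩, ?_⟩
  rintro ⟨q1, q2⟩ ⟨hq1a, hq12, hq2a, hqneg, hqzero, hqpos⟩
  have hq1I : q1 ∈ Set.Icc a₁ a₂ := ⟨hq1a, hq12.trans hq2a⟩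
  have hq2I : q2 ∈ Set.Icc a₁ a₂ := ⟨hq1a.trans hq12, hq2a⟩
  have hq1 : q1 = xp := by
    rcases lt_trichotomy q1 xp with hc | hc | hc
    · have h0 : F q1 = 0 := hqzero q1 ⟨le_refl _, hq12⟩
      exact absurd h0 (ne_of_lt (hneg q1 hq1I hc))
    · exact hc
    · have h0 : F xp < 0 := hqneg xp hxpI hc
      rw [hFxp] at h0
      exact absurd h0 (lt_irrefl 0)
  have hq2 : q2 = xq := by
    rcases lt_trichotomy q2 xq with hc | hc | hc
    · have h0 : 0 < F xq := hqpos xq hxqI hc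
      rw [hFxq] at h0
      exact absurd h0 (lt_irrefl 0)
    · exact hc
    · have h0 : F q2 = 0 := hqzero q2 ⟨hq12, le_refl _⟩
      exact absurd h0 (ne_of_gt (hpos q2 hq2I hc))
  simp [Prod.ext_iff, hq1, hq2]
end

section
/- In the setting of the turning interval [x₊, x⁺] for a mode θ with Re ω > 0: if x₊ < x⁺ then B = 0 a.e. on (x₊, x⁺) and θ' is constant on [x₊, x⁺]. In particular, if B > 0 a.e. on (a₁,a₂) then x₊ = x⁺. -/
open MeasureTheory Set Filter Topology intervalIntegral

section helpers

lemma stmt10_ae_hasDerivAt (f : ℝ → ℂ) (hf : Integrable f) (a : ℝ) :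
    ∀ᵐ x ∂(volume : Measure ℝ), HasDerivAt (fun y => ∫ t in a..y, f t) (f x) x := by
  have hloc : LocallyIntegrable f volume := hf.locallyIntegrable
  filter_upwards [IsUnifLocDoublingMeasure.ae_tendsto_average_norm_sub volume hloc 1] with x hx
  have hδ : Tendsto (fun y : ℝ => |y - x|) (𝓝[≠] x) (𝓝[>] 0) := by
    rw [tendsto_nhdsWithin_iff]
    constructor
    · apply Tendsto.mono_left _ nhdsWithin_le_nhds
      have : Tendsto (fun y : ℝ => |y - x|) (𝓝 x) (𝓝 |x - x|) :=
        (continuous_abs.comp (continuous_id.sub continuous_const)).tendsto x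
      simpa using this
    · filter_upwards [self_mem_nhdsWithin] with y hy
      exact abs_pos.2 (sub_ne_zero.2 hy)
  have havg : Tendsto (fun y : ℝ => ⨍ z in Metric.closedBall x |y - x|, ‖f z - f x‖)
      (𝓝[≠] x) (𝓝 0) :=
    hx (fun _ => x) (fun y => |y - x|) hδ (by
      filter_upwards with y
      simp [Metric.mem_closedBall, abs_nonneg])
  rw [hasDerivAt_iff_tendsto]
  rw [← nhdsNE_sup_pure x, tendsto_sup]
  constructor
  · apply squeeze_zero' (g := fun y => 2 * ⨍ z in Metric.closedBall x |y - x|, ‖f z - f x‖)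
    · filter_upwards with y; positivity
    · filter_upwards [self_mem_nhdsWithin] with y hy
      have hyx : y ≠ x := hy
      have h1 : (∫ t in a..y, f t) - (∫ t in a..x, f t) = ∫ t in x..y, f t :=
        integral_interval_sub_left (hf.intervalIntegrable) (hf.intervalIntegrable)
      have h2 : (y - x) • f x = ∫ t in x..y, f x := by
        rw [intervalIntegral.integral_const]
      have h3 : ‖(∫ t in a..y, f t) - (∫ t in a..x, f t) - (y - x) • f x‖
          = ‖∫ t in x..y, (f t - f x)‖ := by
        rw [h1, h2, ← intervalIntegral.integral_sub (hf.intervalIntegrable)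
          (intervalIntegrable_const)]
      rw [h3]
      have hpos0 : 0 < |y - x| := abs_pos.2 (sub_ne_zero.2 hyx)
      have hsub : Set.uIoc x y ⊆ Metric.closedBall x |y - x| := by
        intro z hz
        have hz' : z ∈ uIcc y x := by
          rw [uIcc_comm]; exact uIoc_subset_uIcc hz
        have := Real.dist_le_of_mem_uIcc hz' (right_mem_uIcc (a := y) (b := x))
        rw [Metric.mem_closedBall]
        simpa [Real.dist_eq, abs_sub_comm] using this
      have hint2 : IntegrableOn (fun z => ‖f z - f x‖) (Metric.closedBall x |y - x|) volume := by
        apply Integrable.norm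
        exact hf.integrableOn.sub (integrableOn_const measure_closedBall_lt_top.ne)
      have h4 : ‖∫ t in x..y, (f t - f x)‖ ≤ ∫ z in Metric.closedBall x |y - x|, ‖f z - f x‖ := by
        refine (intervalIntegral.norm_integral_le_integral_norm_uIoc).trans ?_
        refine setIntegral_mono_set hint2 ?_ hsub.eventuallyLE
        filter_upwards with z using norm_nonneg _
      have hvol : (volume (Metric.closedBall x |y - x|)).toReal = 2 * |y - x| := by
        rw [Real.volume_closedBall]
        rw [ENNReal.toReal_ofReal (by positivity)]
      have h5 : ∫ z in Metric.closedBall x |y - x|, ‖f z - f x‖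
          = (2 * |y - x|) * ⨍ z in Metric.closedBall x |y - x|, ‖f z - f x‖ := by
        rw [setAverage_eq, measureReal_def, hvol]
        rw [smul_eq_mul, ← mul_assoc]
        rw [mul_inv_cancel₀ (by positivity : (2:ℝ) * |y - x| ≠ 0), one_mul]
        
      calc ‖y - x‖⁻¹ * ‖∫ t in x..y, (f t - f x)‖
          ≤ ‖y - x‖⁻¹ * ((2 * |y - x|) * ⨍ z in Metric.closedBall x |y - x|, ‖f z - f x‖) := by
            rw [← h5]; exact mul_le_mul_of_nonneg_left h4 (by positivity)
        _ = 2 * ⨍ z in Metric.closedBall x |y - x|, ‖f z - f x‖ := by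
            rw [Real.norm_eq_abs]
            field_simp [hpos0.ne']
    · simpa using havg.const_mul 2
  · rw [tendsto_pure_left]
    intro s hs
    simpa using mem_of_mem_nhds hs

lemma stmt10_gronwall {a b : ℝ} (hab : a ≤ b) {K : ℝ → ℝ}
    (hK : IntegrableOn K (Icc a b)) (hK0 : ∀ x, 0 ≤ K x)
    {w : ℝ → ℝ} (hw : ContinuousOn w (Icc a b)) (hw0 : ∀ x ∈ Icc a b, 0 ≤ w x)
    (hKw : IntegrableOn (fun t => K t * w t) (Icc a b))
    (hineq : ∀ x ∈ Icc a b, w x ≤ ∫ t in x..b, K t * w t) :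
    ∀ x ∈ Icc a b, w x = 0 := by
  set A : Set ℝ := {x | x ∈ Icc a b ∧ ∀ y ∈ Icc x b, w y = 0} with hAdef
  have hKwInt : ∀ {x y : ℝ}, a ≤ x → x ≤ y → y ≤ b →
      IntervalIntegrable (fun t => K t * w t) volume x y := fun {x y} h1 h2 h3 =>
    (hKw.mono_set (by rw [uIcc_of_le h2]; exact Icc_subset_Icc h1 h3)).intervalIntegrable
  have hKInt : ∀ {x y : ℝ}, a ≤ x → x ≤ y → y ≤ b →
      IntervalIntegrable K volume x y := fun {x y} h1 h2 h3 =>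
    (hK.mono_set (by rw [uIcc_of_le h2]; exact Icc_subset_Icc h1 h3)).intervalIntegrable
  have hbA : b ∈ A := by
    refine ⟨right_mem_Icc.2 hab, fun y hy => ?_⟩
    have hyb : y = b := le_antisymm hy.2 hy.1
    subst hyb
    have h1 := hineq y ⟨hab, le_refl _⟩
    simp only [intervalIntegral.integral_same] at h1
    exact le_antisymm h1 (hw0 y ⟨hab, le_refl _⟩)
  have hAne : A.Nonempty := ⟨b, hbA⟩
  have hAbdd : BddBelow A := ⟨a, fun x hx => hx.1.1⟩
  set c := sInf A with hc
  have hca : a ≤ c := le_csInf hAne fun x hx => hx.1.1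
  have hcb : c ≤ b := csInf_le hAbdd hbA
  have hcz : ∀ y ∈ Ioc c b, w y = 0 := by
    intro y hy
    obtain ⟨x, hxA, hxy⟩ := (csInf_lt_iff hAbdd hAne).1 hy.1
    exact hxA.2 y ⟨hxy.le, hy.2⟩
  -- integral of K*w over any [x,b] with c ≤ x equals 0 contribution from [c,b]
  have hzero_int : ∀ x, c ≤ x → x ≤ b → (∫ t in x..b, K t * w t) = 0 := by
    intro x hx1 hx2
    rw [intervalIntegral.integral_of_le hx2]
    rw [MeasureTheory.setIntegral_congr_fun measurableSet_Ioc
      (g := fun _ => (0:ℝ)) (fun t ht => by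
        rw [hcz t ⟨lt_of_le_of_lt hx1 ht.1, ht.2⟩, mul_zero])]
    simp
  have hcA : c ∈ A := by
    refine ⟨⟨hca, hcb⟩, fun y hy => ?_⟩
    rcases eq_or_lt_of_le hy.1 with h | h
    · have h1 := hineq c ⟨hca, hcb⟩
      rw [hzero_int c le_rfl hcb] at h1
      have h2 := le_antisymm h1 (hw0 c ⟨hca, hcb⟩)
      rwa [← h]
    · exact hcz y ⟨h, hy.2⟩
  -- show c = a
  have hceq : c = a := by
    by_contra hne
    have hac : a < c := lt_of_le_of_ne hca (Ne.symm hne)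
    -- continuity of d ↦ ∫ d..c K at c
    have hQ : ContinuousOn (fun x => ∫ t in x..c, K t) (Icc a c) := by
      have := intervalIntegral.continuousOn_primitive_interval_left
        (f := K) (μ := volume) (a := a) (b := c)
        (by rw [uIcc_of_le hca]; exact hK.mono_set (Icc_subset_Icc le_rfl hcb))
      rwa [uIcc_of_le hca] at this
    have hQc : Tendsto (fun x => ∫ t in x..c, K t) (𝓝[Ioo a c] c) (𝓝 0) := by
      have := (hQ c (right_mem_Icc.2 hca)).mono_left
        (nhdsWithin_mono c Ioo_subset_Icc_self)
      simpa using this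
    haveI : NeBot (𝓝[Ioo a c] c) := right_nhdsWithin_Ioo_neBot hac
    have hev : ∀ᶠ d in 𝓝[Ioo a c] c, (∫ t in d..c, K t) < 1/2 :=
      hQc.eventually (eventually_lt_nhds (by norm_num : (0:ℝ) < 1/2))
    obtain ⟨d, hd2, hd1⟩ := (hev.and self_mem_nhdsWithin).exists
    -- d ∈ Ioo a c, ∫ d..c K < 1/2
    have hdc : d ≤ c := hd1.2.le
    have hda : a ≤ d := hd1.1.le
    -- max of w on [d,c]
    obtain ⟨z, hz, hzmax⟩ := isCompact_Icc.exists_isMaxOn (nonempty_Icc.2 hdc)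
      (hw.mono (Icc_subset_Icc hda hcb))
    set M := w z with hM
    have hM0 : 0 ≤ M := hw0 z ⟨hda.trans hz.1, hz.2.trans hcb⟩
    have hbound : ∀ x ∈ Icc d c, w x ≤ M * (1/2) := by
      intro x hx
      have hxa : a ≤ x := hda.trans hx.1
      have hxb : x ≤ b := hx.2.trans hcb
      have h1 := hineq x ⟨hxa, hxb⟩
      have hsplit : (∫ t in x..b, K t * w t)
          = (∫ t in x..c, K t * w t) + ∫ t in c..b, K t * w t :=
        (intervalIntegral.integral_add_adjacent_intervals
          (hKwInt hxa hx.2 hcb) (hKwInt hca hcb le_rfl)).symm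
      rw [hsplit, hzero_int c le_rfl hcb, add_zero] at h1
      have h2 : (∫ t in x..c, K t * w t) ≤ ∫ t in x..c, K t * M := by
        refine intervalIntegral.integral_mono_on hx.2 (hKwInt hxa hx.2 hcb)
          ((hKInt hxa hx.2 hcb).mul_const M) (fun t ht => ?_)
        have htdc : t ∈ Icc d c := ⟨hx.1.trans ht.1, ht.2⟩
        exact mul_le_mul_of_nonneg_left (hzmax htdc) (hK0 t)
      have h3 : (∫ t in x..c, K t * M) = M * ∫ t in x..c, K t := by
        rw [← intervalIntegral.integral_const_mul]
        congr 1; ext t; ring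
      have h4 : (∫ t in x..c, K t) ≤ ∫ t in d..c, K t := by
        have hsplit2 : (∫ t in d..c, K t)
            = (∫ t in d..x, K t) + ∫ t in x..c, K t :=
          (intervalIntegral.integral_add_adjacent_intervals
            (hKInt hda hx.1 (hx.2.trans hcb)) (hKInt hxa hx.2 hcb)).symm
        have h5 : 0 ≤ ∫ t in d..x, K t :=
          intervalIntegral.integral_nonneg hx.1 (fun t _ => hK0 t)
        linarith
      calc w x ≤ ∫ t in x..c, K t * w t := h1
        _ ≤ M * ∫ t in x..c, K t := by rw [← h3]; exact h2
        _ ≤ M * (1/2) := by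
            apply mul_le_mul_of_nonneg_left _ hM0
            exact (h4.trans hd2.le)
    have hMz : M ≤ M * (1/2) := hbound z hz
    have hM00 : M ≤ 0 := by linarith
    have hdA : d ∈ A := by
      refine ⟨⟨hda, hdc.trans hcb⟩, fun y hy => ?_⟩
      rcases le_or_gt y c with h | h
      · exact le_antisymm ((hzmax ⟨hy.1, h⟩).trans hM00) (hw0 y ⟨hda.trans hy.1, hy.2⟩)
      · exact hcz y ⟨h, hy.2⟩
    exact absurd (csInf_le hAbdd hdA) (not_le.2 hd1.2)
  intro x hx
  exact hcA.2 x (by rwa [hceq])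

end helpers

/-- On the turning interval: if `x₊ < x⁺` then `B = 0` a.e. on `(x₊,x⁺)` and `θ'` is
constant there; in particular `B > 0` a.e. forces `x₊ = x⁺`. -/
theorem stmt10 (a₁ a₂ : ℝ) (h12 : a₁ < a₂) (B : ℝ → ℝ)
    (hBint : MeasureTheory.IntegrableOn B (Set.Icc a₁ a₂))
    (hB0 : ∀ᵐ x ∂(MeasureTheory.volume.restrict (Set.Icc a₁ a₂)), 0 ≤ B x)
    (ν₁ μ₂ : ℝ) (hν₁ : 0 ≤ ν₁) (hμ₂ : 0 ≤ μ₂)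
    (ω : ℂ) (hre : 0 < ω.re) (him : ω.im < 0)
    (θ g : ℝ → ℂ)
    (hθC : ContinuousOn θ (Set.Icc a₁ a₂)) (hgC : ContinuousOn g (Set.Icc a₁ a₂))
    (hint : MeasureTheory.IntegrableOn (fun t => (B t : ℂ) * θ t) (Set.Icc a₁ a₂))
    (hθ : ∀ x ∈ Set.Icc a₁ a₂, θ x = θ a₁ + ∫ t in a₁..x, g t)
    (hg : ∀ x ∈ Set.Icc a₁ a₂, g x = g a₁ + ∫ t in a₁..x, -(ω ^ 2) * (B t : ℂ) * θ t)
    (hic0 : θ a₁ = 1) (hic1 : g a₁ = -Complex.I * ω * (ν₁ : ℂ))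
    (hbc2 : (μ₂ : ℂ) * g a₂ = Complex.I * ω * θ a₂)
    (xs xt : ℝ) (hxs : a₁ ≤ xs) (hxst : xs ≤ xt) (hxt : xt ≤ a₂)
    (hneg : ∀ x ∈ Set.Icc a₁ a₂, x < xs → ((starRingEnd ℂ) (θ x) * g x).im < 0)
    (hzero : ∀ x ∈ Set.Icc xs xt, ((starRingEnd ℂ) (θ x) * g x).im = 0)
    (hpos : ∀ x ∈ Set.Icc a₁ a₂, xt < x → 0 < ((starRingEnd ℂ) (θ x) * g x).im) :
    (xs < xt →
      (∀ᵐ x ∂(MeasureTheory.volume.restrict (Set.Ioo xs xt)), B x = 0) ∧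
      (∀ x ∈ Set.Icc xs xt, g x = g xs)) ∧
    ((∀ᵐ x ∂(MeasureTheory.volume.restrict (Set.Icc a₁ a₂)), 0 < B x) → xs = xt) := by
  have hxsI : xs ∈ Icc a₁ a₂ := ⟨hxs, hxst.trans hxt⟩
  set f : ℝ → ℂ := fun t => -(ω ^ 2) * (B t : ℂ) * θ t with hfdef
  have hfInt : IntegrableOn f (Icc a₁ a₂) := by
    have h0 : IntegrableOn (fun t => -(ω ^ 2) * ((B t : ℂ) * θ t)) (Icc a₁ a₂) volume :=
      hint.const_mul (-(ω ^ 2))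
    apply h0.congr_fun ?_ measurableSet_Icc
    intro t _; simp only [hfdef]; ring
  -- interval integrability helpers
  have hfII : ∀ {x y : ℝ}, a₁ ≤ x → x ≤ y → y ≤ a₂ → IntervalIntegrable f volume x y :=
    fun {x y} h1 h2 h3 =>
      (hfInt.mono_set (by rw [uIcc_of_le h2]; exact Icc_subset_Icc h1 h3)).intervalIntegrable
  have hgII : ∀ {x y : ℝ}, a₁ ≤ x → x ≤ y → y ≤ a₂ → IntervalIntegrable g volume x y :=
    fun {x y} h1 h2 h3 =>
      ((hgC.mono (Icc_subset_Icc h1 h3)).integrableOn_Icc.mono_set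
        (by rw [uIcc_of_le h2])).intervalIntegrable
  set fB : ℝ → ℂ := (Icc a₁ a₂).indicator f with hfBdef
  have hfBInt : Integrable fB := (integrable_indicator_iff measurableSet_Icc).2 hfInt
  have hgrep : ∀ y ∈ Icc a₁ a₂, g y = g a₁ + ∫ t in a₁..y, fB t := by
    intro y hy
    rw [hg y hy]
    congr 1
    apply intervalIntegral.integral_congr
    intro t ht
    have ht' : t ∈ Icc a₁ a₂ := by
      rw [uIcc_of_le hy.1] at ht
      exact ⟨ht.1, ht.2.trans hy.2⟩
    exact (indicator_of_mem ht' f).symm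
  -- MAIN PART, assuming xs < xt
  have main : xs < xt →
      (∀ᵐ x ∂(volume.restrict (Ioo xs xt)), B x = 0) ∧
      (∀ x ∈ Icc xs xt, g x = g xs) := by
    intro hst
    -- Step 1: a.e. on (xs,xt), B x * normSq (θ x) = 0
    have key1 : ∀ᵐ x ∂(volume.restrict (Ioo xs xt)), B x * Complex.normSq (θ x) = 0 := by
      filter_upwards [ae_restrict_of_ae (stmt10_ae_hasDerivAt fB hfBInt a₁),
        ae_restrict_mem measurableSet_Ioo] with x hxD hxmem
      have hx1 : a₁ < x := lt_of_le_of_lt hxs hxmem.1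
      have hx2 : x < a₂ := lt_of_lt_of_le hxmem.2 hxt
      have hxI : x ∈ Icc a₁ a₂ := ⟨hx1.le, hx2.le⟩
      have hIccNhds : Icc a₁ a₂ ∈ 𝓝 x := Icc_mem_nhds hx1 hx2
      have hgD : HasDerivAt g (fB x) x := by
        refine HasDerivAt.congr_of_eventuallyEq ((hxD.const_add (g a₁))) ?_
        exact eventually_of_mem hIccNhds fun y hy => hgrep y hy
      have hθD : HasDerivAt θ (g x) x := by
        have hprim : HasDerivAt (fun y => ∫ t in a₁..y, g t) (g x) x :=
          intervalIntegral.integral_hasDerivAt_right (hgII le_rfl hx1.le hx2.le)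
            ⟨Icc a₁ a₂, hIccNhds, hgC.aestronglyMeasurable measurableSet_Icc⟩
            ((hgC x hxI).continuousAt hIccNhds)
        refine HasDerivAt.congr_of_eventuallyEq ((hprim.const_add (θ a₁))) ?_
        exact eventually_of_mem hIccNhds fun y hy => hθ y hy
      have hconjD : HasDerivAt (fun y => (starRingEnd ℂ) (θ y)) ((starRingEnd ℂ) (g x)) x := by
        simpa only [starRingEnd_apply] using hθD.star
      have hH : HasDerivAt (fun y => (starRingEnd ℂ) (θ y) * g y)
          ((starRingEnd ℂ) (g x) * g x + (starRingEnd ℂ) (θ x) * fB x) x := hconjD.mul hgD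
      have hF : HasDerivAt (fun y => ((starRingEnd ℂ) (θ y) * g y).im)
          (((starRingEnd ℂ) (g x) * g x + (starRingEnd ℂ) (θ x) * fB x).im) x :=
        (Complex.imCLM.hasFDerivAt).comp_hasDerivAt x hH
      have hIccst : Icc xs xt ∈ 𝓝 x := Icc_mem_nhds hxmem.1 hxmem.2
      have hFzero : HasDerivAt (fun _ : ℝ => (0 : ℝ))
          (((starRingEnd ℂ) (g x) * g x + (starRingEnd ℂ) (θ x) * fB x).im) x := by
        refine hF.congr_of_eventuallyEq ?_
        exact eventually_of_mem hIccst fun y hy => (hzero y hy).symm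
      have hD0 : ((starRingEnd ℂ) (g x) * g x + (starRingEnd ℂ) (θ x) * fB x).im = 0 :=
        hFzero.unique (hasDerivAt_const x 0)
      have hfBx : fB x = f x := indicator_of_mem hxI f
      have h1 : (starRingEnd ℂ) (g x) * g x = ((Complex.normSq (g x) : ℝ) : ℂ) :=
        Complex.normSq_eq_conj_mul_self.symm
      have h2 : (starRingEnd ℂ) (θ x) * fB x
          = -(ω ^ 2) * (((B x * Complex.normSq (θ x)) : ℝ) : ℂ) := by
        rw [hfBx]
        simp only [hfdef]
        rw [show (starRingEnd ℂ) (θ x) * (-(ω ^ 2) * (B x : ℂ) * θ x)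
            = -(ω ^ 2) * ((B x : ℂ) * ((starRingEnd ℂ) (θ x) * θ x)) from by ring]
        rw [← Complex.normSq_eq_conj_mul_self]
        push_cast
        ring
      rw [h1, h2] at hD0
      have h3 : (-(ω ^ 2) * (((B x * Complex.normSq (θ x)) : ℝ) : ℂ)).im
          = (-(ω ^ 2)).im * (B x * Complex.normSq (θ x)) := by
        simp [Complex.mul_im]
      rw [Complex.add_im, Complex.ofReal_im, zero_add, h3] at hD0
      have h4 : (-(ω ^ 2)).im ≠ 0 := by
        have hsq : (ω ^ 2).im = 2 * ω.re * ω.im := by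
          rw [pow_two, Complex.mul_im]; ring
        simp only [Complex.neg_im, hsq]
        nlinarith
      exact (mul_eq_zero.1 hD0).resolve_left h4
    -- Step 2: a.e. on (xs,xt), (B x : ℂ) * θ x = 0
    have key2 : ∀ᵐ x ∂(volume.restrict (Ioo xs xt)), (B x : ℂ) * θ x = 0 := by
      filter_upwards [key1] with x hx
      rcases mul_eq_zero.1 hx with h | h
      · rw [h]; simp
      · rw [Complex.normSq_eq_zero.1 h]; simp
    -- Step 3: integral of f vanishes on subintervals of [xs,xt]
    have hfzero : ∀ x ∈ Icc xs xt, (∫ t in xs..x, f t) = 0 := by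
      intro x hx
      have hnull : volume ({t | ¬ (B t : ℂ) * θ t = 0} ∩ Ioc xs x) = 0 := by
        have h0 : volume ({t | ¬ (B t : ℂ) * θ t = 0} ∩ Ioo xs xt) = 0 := by
          have := key2
          rw [MeasureTheory.ae_iff, Measure.restrict_apply' measurableSet_Ioo] at this
          exact this
        refine measure_mono_null ?_ (by
          rw [measure_union_null_iff]
          exact ⟨h0, measure_singleton x⟩ :
            volume (({t | ¬ (B t : ℂ) * θ t = 0} ∩ Ioo xs xt) ∪ {x}) = 0)
        rintro t ⟨ht1, ht2⟩
        rcases lt_or_ge t xt with h | h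
        · exact Or.inl ⟨ht1, ⟨ht2.1, h⟩⟩
        · right
          exact le_antisymm ht2.2 (hx.2.trans h)
      have hae : ∀ᵐ t ∂(volume.restrict (Ioc xs x)), f t = 0 := by
        rw [MeasureTheory.ae_iff, Measure.restrict_apply' measurableSet_Ioc]
        refine measure_mono_null ?_ hnull
        rintro t ⟨ht1, ht2⟩
        refine ⟨fun hcon => ht1 ?_, ht2⟩
        simp only [hfdef]
        rw [mul_assoc, hcon, mul_zero]
      rw [intervalIntegral.integral_of_le hx.1]
      exact MeasureTheory.integral_eq_zero_of_ae hae
    -- Step 4: g is constant on [xs,xt]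
    have hgconst : ∀ x ∈ Icc xs xt, g x = g xs := by
      intro x hx
      have hx' : x ∈ Icc a₁ a₂ := ⟨hxs.trans hx.1, hx.2.trans hxt⟩
      rw [hg x hx', hg xs hxsI]
      congr 1
      have hsub : (∫ t in a₁..x, f t) - (∫ t in a₁..xs, f t) = ∫ t in xs..x, f t :=
        intervalIntegral.integral_interval_sub_left (hfII le_rfl hx'.1 hx'.2)
          (hfII le_rfl hxsI.1 hxsI.2)
      have := hfzero x hx
      simp only [hfdef] at hsub this ⊢
      linear_combination hsub + this
    -- Step 5: θ is affine on [xs,xt]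
    have hθaff : ∀ x ∈ Icc xs xt, θ x = θ xs + (x - xs) • g xs := by
      intro x hx
      have hx' : x ∈ Icc a₁ a₂ := ⟨hxs.trans hx.1, hx.2.trans hxt⟩
      have hsub : (∫ t in a₁..x, g t) - (∫ t in a₁..xs, g t) = ∫ t in xs..x, g t :=
        intervalIntegral.integral_interval_sub_left (hgII le_rfl hx'.1 hx'.2)
          (hgII le_rfl hxsI.1 hxsI.2)
      have hconst : (∫ t in xs..x, g t) = (x - xs) • g xs := by
        rw [intervalIntegral.integral_congr (g := fun _ => g xs) (fun t ht => by
          rw [uIcc_of_le hx.1] at ht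
          exact hgconst t ⟨ht.1, ht.2.trans hx.2⟩)]
        rw [intervalIntegral.integral_const]
      have e1 := hθ x hx'
      have e2 := hθ xs hxsI
      rw [e1, e2]
      rw [← hconst, ← hsub]
      ring
    -- Step 6: B = 0 a.e. on (xs,xt)
    have hBzero : ∀ᵐ x ∂(volume.restrict (Ioo xs xt)), B x = 0 := by
      by_cases hdeg : θ xs = 0 ∧ g xs = 0
      · -- degenerate case is impossible, via Gronwall on [a₁, xs]
        exfalso
        have hxsa : a₁ < xs := by
          rcases eq_or_lt_of_le hxs with h | h
          · exfalso
            rw [← h] at hdeg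
            rw [hic0] at hdeg
            exact one_ne_zero hdeg.1
          · exact h
        set K : ℝ → ℝ := fun t => 1 + ‖ω‖ ^ 2 * |B t| with hKdef
        set w : ℝ → ℝ := fun t => ‖θ t‖ + ‖g t‖ with hwdef
        have hIccsub : Icc a₁ xs ⊆ Icc a₁ a₂ := Icc_subset_Icc le_rfl hxsI.2
        have hKint : IntegrableOn K (Icc a₁ xs) := by
          apply Integrable.add
          · exact integrableOn_const measure_Icc_lt_top.ne
          · exact (hBint.mono_set hIccsub).abs.const_mul _
        have hwC : ContinuousOn w (Icc a₁ xs) :=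
          ((hθC.mono hIccsub).norm).add ((hgC.mono hIccsub).norm)
        have hw0 : ∀ t ∈ Icc a₁ xs, 0 ≤ w t := fun t _ => by positivity
        have hK0 : ∀ t, 0 ≤ K t := fun t => by positivity
        have hKw : IntegrableOn (fun t => K t * w t) (Icc a₁ xs) :=
          hKint.mul_continuousOn hwC isCompact_Icc
        have hineq : ∀ x ∈ Icc a₁ xs, w x ≤ ∫ t in x..xs, K t * w t := by
          intro x hx
          have hxI2 : x ∈ Icc a₁ a₂ := hIccsub hx
          have hθx : θ x = -∫ t in x..xs, g t := by
            have hsub : (∫ t in a₁..xs, g t) - (∫ t in a₁..x, g t) = ∫ t in x..xs, g t :=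
              intervalIntegral.integral_interval_sub_left (hgII le_rfl hxsI.1 hxsI.2)
                (hgII le_rfl hxI2.1 hxI2.2)
            have e1 := hθ x hxI2
            have e2 := hθ xs hxsI
            rw [hdeg.1] at e2
            linear_combination e1 - e2 - hsub
          have hgx : g x = -∫ t in x..xs, f t := by
            have hsub : (∫ t in a₁..xs, f t) - (∫ t in a₁..x, f t) = ∫ t in x..xs, f t :=
              intervalIntegral.integral_interval_sub_left (hfII le_rfl hxsI.1 hxsI.2)
                (hfII le_rfl hxI2.1 hxI2.2)
            have e1 := hg x hxI2
            have e2 := hg xs hxsI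
            rw [hdeg.2] at e2
            simp only [hfdef] at hsub ⊢
            linear_combination e1 - e2 - hsub
          have hgn : IntervalIntegrable (fun t => ‖g t‖) volume x xs :=
            (hgII hxI2.1 hx.2 hxsI.2).norm
          have hfn : IntervalIntegrable (fun t => ‖f t‖) volume x xs :=
            (hfII hxI2.1 hx.2 hxsI.2).norm
          have hb1 : ‖θ x‖ ≤ ∫ t in x..xs, ‖g t‖ := by
            rw [hθx, norm_neg]
            exact intervalIntegral.norm_integral_le_integral_norm hx.2
          have hb2 : ‖g x‖ ≤ ∫ t in x..xs, ‖f t‖ := by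
            rw [hgx, norm_neg]
            exact intervalIntegral.norm_integral_le_integral_norm hx.2
          have hsum : (∫ t in x..xs, ‖g t‖) + (∫ t in x..xs, ‖f t‖)
              = ∫ t in x..xs, (‖g t‖ + ‖f t‖) := (intervalIntegral.integral_add hgn hfn).symm
          have hmono : (∫ t in x..xs, (‖g t‖ + ‖f t‖)) ≤ ∫ t in x..xs, K t * w t := by
            have hKwII : IntervalIntegrable (fun t => K t * w t) volume x xs :=
              (hKw.mono_set (by rw [uIcc_of_le hx.2]; exact Icc_subset_Icc hx.1 le_rfl)).intervalIntegrable
            refine intervalIntegral.integral_mono_on hx.2 (hgn.add hfn) hKwII (fun t ht => ?_)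
            have hft : ‖f t‖ = ‖ω‖ ^ 2 * |B t| * ‖θ t‖ := by
              simp only [hfdef]
              rw [norm_mul, norm_mul, norm_neg, norm_pow, Complex.norm_real, Real.norm_eq_abs]
            have h8 : (0:ℝ) ≤ ‖θ t‖ := norm_nonneg _
            have h9 : (0:ℝ) ≤ ‖g t‖ := norm_nonneg _
            have h10 : (0:ℝ) ≤ |B t| := abs_nonneg _
            have h11 : (0:ℝ) ≤ ‖ω‖ ^ 2 := by positivity
            simp only [hKdef, hwdef]
            rw [hft]
            nlinarith [mul_nonneg (mul_nonneg h11 h10) h9, mul_nonneg (mul_nonneg h11 h10) h8]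
          calc w x = ‖θ x‖ + ‖g x‖ := rfl
            _ ≤ (∫ t in x..xs, ‖g t‖) + (∫ t in x..xs, ‖f t‖) := add_le_add hb1 hb2
            _ = ∫ t in x..xs, (‖g t‖ + ‖f t‖) := hsum
            _ ≤ ∫ t in x..xs, K t * w t := hmono
        have hwa := stmt10_gronwall hxs hKint hK0 hwC hw0 hKw hineq a₁ (left_mem_Icc.2 hxs)
        simp only [hwdef, hic0, norm_one] at hwa
        nlinarith [norm_nonneg (g a₁), hwa]
      · -- non-degenerate: θ has at most one zero in (xs,xt)
        have hsub : {x ∈ Ioo xs xt | θ x = 0}.Subsingleton := by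
          intro x hx y hy
          have hxa := hθaff x ⟨hx.1.1.le, hx.1.2.le⟩
          have hya := hθaff y ⟨hy.1.1.le, hy.1.2.le⟩
          rw [hx.2] at hxa
          rw [hy.2] at hya
          by_cases hgs : g xs = 0
          · exfalso
            apply hdeg
            refine ⟨?_, hgs⟩
            rw [hgs, smul_zero, add_zero] at hxa
            exact hxa.symm
          · have h5 : (x - xs : ℝ) • g xs = (y - xs : ℝ) • g xs :=
              add_left_cancel (hxa.symm.trans hya)
            have h7 : ((x - y : ℝ)) • g xs = 0 := by
              have h8 : ((x - xs) - (y - xs) : ℝ) • g xs = 0 := by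
                rw [sub_smul, h5, sub_self]
              simpa using h8
            rcases smul_eq_zero.1 h7 with h | h
            · exact sub_eq_zero.1 h
            · exact absurd h hgs
        have hnullset : volume ({x | ¬ θ x ≠ 0} ∩ Ioo xs xt) = 0 := by
          refine measure_mono_null ?_ (hsub.measure_zero volume)
          rintro x ⟨hx1, hx2⟩
          exact ⟨hx2, not_not.1 hx1⟩
        have hne : ∀ᵐ x ∂(volume.restrict (Ioo xs xt)), θ x ≠ 0 := by
          rw [MeasureTheory.ae_iff, Measure.restrict_apply' measurableSet_Ioo]
          exact hnullset
        filter_upwards [key2, hne] with x h1 h2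
        rcases mul_eq_zero.1 h1 with h | h
        · exact_mod_cast h
        · exact absurd h h2
    exact ⟨hBzero, hgconst⟩
  refine ⟨main, ?_⟩
  intro hBpos
  by_contra hne
  have hst : xs < xt := lt_of_le_of_ne hxst hne
  obtain ⟨h1, _⟩ := main hst
  have h2 : ∀ᵐ x ∂(volume.restrict (Ioo xs xt)), 0 < B x :=
    ae_restrict_of_ae_restrict_of_subset
      (show Ioo xs xt ⊆ Icc a₁ a₂ from fun x hx => ⟨hxs.trans hx.1.le, hx.2.le.trans hxt⟩) hBpos
  have h3 : ∀ᵐ x ∂(volume.restrict (Ioo xs xt)), False := by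
    filter_upwards [h1, h2] with x hx1 hx2
    rw [hx1] at hx2
    exact lt_irrefl 0 hx2
  rw [MeasureTheory.ae_iff, Measure.restrict_apply' measurableSet_Ioo] at h3
  simp only [not_false_eq_true, setOf_true, univ_inter] at h3
  rw [Real.volume_Ioo] at h3
  exact absurd h3 (by
    simp only [ENNReal.ofReal_eq_zero, not_le]
    linarith)
end
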